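/- arXiv:2404.17564 — 6 statements merged into one kernel-verified Lean document; each statement's English description precedes it below -/
import Mathlib

section
/- Let G be a finite connected graph, K a clique of G whose removal disconnects G (a clique separator), and X the union of some of the connected components of G − K. Then X ∪ K is monophonically convex. -/
open Classical

variable {V : Type*}

namespace Paper

def mInterval (G : SimpleGraph V) (u v : V) : Set V :=
  {w | ∃ p : G.Walk u v, p.IsPath ∧ p.toSubgraph.IsInduced ∧ w ∈ p.support}

def MConvex (G : SimpleGraph V) (C : Set V) : Prop :=
  ∀ u ∈ C, ∀ v ∈ C, mInterval G u v ⊆ C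

def mHull (G : SimpleGraph V) (X : Set V) : Set V :=
  ⋂₀ {C | MConvex G C ∧ X ⊆ C}

def mIntervalSet (G : SimpleGraph V) (Z : Set V) : Set V :=
  ⋃ u ∈ Z, ⋃ v ∈ Z, mInterval G u v

def Sep (G : SimpleGraph V) (A B : Set V) : Prop :=
  ∃ H : Set V, MConvex G H ∧ MConvex G Hᶜ ∧ A ⊆ H ∧ B ⊆ Hᶜ

def nbhd (G : SimpleGraph V) (X : Set V) : Set V :=
  {v | v ∉ X ∧ ∃ x ∈ X, G.Adj x v}

def cnbhd (G : SimpleGraph V) (X : Set V) : Set V := X ∪ nbhd G X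

def front (G : SimpleGraph V) (X Y : Set V) : Set V := X ∩ cnbhd G Y

def IsClique (G : SimpleGraph V) (K : Set V) : Prop :=
  ∀ u ∈ K, ∀ v ∈ K, u ≠ v → G.Adj u v

def shadow (G : SimpleGraph V) (A B : Set V) : Set V :=
  {v | (mHull G (B ∪ {v}) ∩ A).Nonempty}

def Forbidden (G : SimpleGraph V) (A B X : Set V) : Prop :=
  X ⊆ (A ∪ B)ᶜ ∧ (mHull G X ∩ A).Nonempty ∧ (mHull G X ∩ B).Nonempty

def MFS (G : SimpleGraph V) (A B : Set V) : Set (Set V) :=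
  {X | Forbidden G A B X ∧ ∀ Y, Y ⊂ X → ¬ Forbidden G A B Y}

def presat (G : SimpleGraph V) (A B : Set V) : Set V :=
  mHull G (shadow G A B ∪ ⋃ X ∈ MFS G A B, ⋂ x ∈ X, mHull G (A ∪ {x}))

def Linked (G : SimpleGraph V) (A B : Set V) : Prop :=
  ∃ a ∈ A, ∃ b ∈ B, G.Adj a b

def Saturated (G : SimpleGraph V) (A B : Set V) : Prop :=
  A = presat G A B ∧ B = presat G B A

def IsCompOf (G : SimpleGraph V) (W S : Set V) : Prop :=
  S.Nonempty ∧ S ⊆ W ∧ (G.induce S).Connected ∧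
    ∀ T, S ⊆ T → T ⊆ W → (G.induce T).Connected → T = S

def Eqv (G : SimpleGraph V) (A B : Set V) (u v : V) : Prop :=
  u = v ∨ ∃ L : List (Set V), L ≠ [] ∧
    (∀ S ∈ L, IsCompOf G (cnbhd G (A ∪ B))ᶜ S) ∧
    List.Chain' (fun S T => (nbhd G S ∩ nbhd G T).Nonempty) L ∧
    (∃ S₀ ∈ L.head?, u ∈ cnbhd G S₀) ∧
    (∃ Sₖ ∈ L.getLast?, v ∈ cnbhd G Sₖ)

end Paper

open Paper

lemma insert_connected' (G : SimpleGraph V) {S : Set V} (h : (G.induce S).Connected)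
    {s w : V} (hs : s ∈ S) (hadj : G.Adj s w) : (G.induce (insert w S)).Connected := by
  have hsub : S ⊆ insert w S := Set.subset_insert w S
  have key : ∀ t : (insert w S : Set V), (G.induce (insert w S)).Reachable t ⟨s, hsub hs⟩ := by
    rintro ⟨t, ht⟩
    rcases ht with rfl | htS
    · exact (SimpleGraph.Adj.reachable (by simpa using hadj.symm))
    · exact SimpleGraph.Reachable.map (G.induceHomOfLE hsub).toHom
        (h.preconnected ⟨t, htS⟩ ⟨s, hs⟩)
  refine ⟨fun a b => (key a).trans (key b).symm⟩

lemma tail_induced' (G : SimpleGraph V) {u a v : V} (h : G.Adj u a) (q : G.Walk a v)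
    (hp : (SimpleGraph.Walk.cons h q).IsPath)
    (hi : (SimpleGraph.Walk.cons h q).toSubgraph.IsInduced) :
    q.toSubgraph.IsInduced := by
  intro x hx y hy hadj
  have hu : u ∉ q.support := by
    have := hp.support_nodup
    simp at this
    exact this.1
  have hx' : x ∈ (SimpleGraph.Walk.cons h q).toSubgraph.verts := by
    simp [SimpleGraph.Walk.mem_verts_toSubgraph] at hx ⊢
    right; exact hx
  have hy' : y ∈ (SimpleGraph.Walk.cons h q).toSubgraph.verts := by
    simp [SimpleGraph.Walk.mem_verts_toSubgraph] at hy ⊢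
    right; exact hy
  have := hi hx' hy' hadj
  simp only [SimpleGraph.Walk.toSubgraph, SimpleGraph.Subgraph.sup_adj] at this
  rcases this with hthis | hthis
  · exfalso
    rw [SimpleGraph.subgraphOfAdj_adj] at hthis
    have hxs : x ∈ q.support := by
      simpa [SimpleGraph.Walk.mem_verts_toSubgraph] using hx
    have hys : y ∈ q.support := by
      simpa [SimpleGraph.Walk.mem_verts_toSubgraph] using hy
    rw [Sym2.eq_iff] at hthis
    rcases hthis with ⟨rfl, rfl⟩ | ⟨rfl, rfl⟩
    · exact hu hxs
    · exact hu hys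
  · exact hthis

lemma first_cross' (G : SimpleGraph V) (C : Set V) :
    ∀ {a v : V} (q : G.Walk a v), a ∉ C → v ∈ C →
      ∃ x y, x ∉ C ∧ y ∈ C ∧ s(x, y) ∈ q.edges ∧ y ∈ q.support := by
  intro a v q
  induction q with
  | nil => intro ha hv; exact absurd hv ha
  | cons h r ih =>
    rename_i b c w
    intro ha hv
    by_cases hc : c ∈ C
    · exact ⟨b, c, ha, hc, by simp, by simp⟩
    · obtain ⟨x, y, hx, hy, he, hs⟩ := ih hc hv
      exact ⟨x, y, hx, hy, by simp [he], by simp [hs]⟩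

theorem stmt_3 [Fintype V] (G : SimpleGraph V) (hG : G.Connected)
    (K : Set V) (hK : IsClique G K) (hsep : ¬ (G.induce Kᶜ).Preconnected)
    (X : Set V) (comps : Set (Set V)) (hcomps : ∀ S ∈ comps, IsCompOf G Kᶜ S)
    (hX : X = ⋃₀ comps) :
    MConvex G (X ∪ K) := by
  subst hX
  set C : Set V := (⋃₀ comps) ∪ K with hC
  have memK : ∀ {x y : V}, x ∈ C → G.Adj x y → y ∉ C → x ∈ K := by
    intro x y hx hxy hy
    rcases hx with hx | hx
    · exfalso
      obtain ⟨S, hS, hxS⟩ := hx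
      obtain ⟨hne, hsub, hconn, hmax⟩ := hcomps S hS
      have hyK : y ∈ Kᶜ := fun hyK => hy (Or.inr hyK)
      have hins : insert y S ⊆ Kᶜ := by
        intro z hz; rcases hz with rfl | hz
        · exact hyK
        · exact hsub hz
      have hT := hmax (insert y S) (Set.subset_insert _ _) hins
        (insert_connected' G hconn hxS hxy)
      have : y ∈ S := hT ▸ Set.mem_insert y S
      exact hy (Or.inl ⟨S, hS, this⟩)
    · exact hx
  have main : ∀ {a b : V} (p : G.Walk a b), p.IsPath → p.toSubgraph.IsInduced →
      a ∈ C → b ∈ C → ∀ w ∈ p.support, w ∈ C := by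
    intro a b p
    induction p with
    | nil =>
      intro _ _ ha _ w hw
      simp at hw; subst hw; exact ha
    | cons h q ih =>
      rename_i x₀ y₀ z₀
      intro hp hind ha hb w hw
      have hx₀ : x₀ ∉ q.support := by
        have := hp.support_nodup
        simp at this
        exact this.1
      by_cases hyC : y₀ ∈ C
      · rw [SimpleGraph.Walk.support_cons] at hw
        rcases List.mem_cons.mp hw with rfl | hw
        · exact ha
        · exact ih (hp.of_cons) (tail_induced' G h q hp hind) hyC hb w hw
      · exfalso
        have haK : x₀ ∈ K := memK ha h hyC
        obtain ⟨x', y', hx', hy', he, hs⟩ := first_cross' G C q hyC hb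
        have hyK : y' ∈ K := memK hy' (q.adj_of_mem_edges he).symm hx'
        have hane : x₀ ≠ y' := by rintro rfl; exact hx₀ hs
        have hadj : G.Adj x₀ y' := hK x₀ haK y' hyK hane
        have hav : x₀ ∈ (SimpleGraph.Walk.cons h q).toSubgraph.verts := by
          simp [SimpleGraph.Walk.mem_verts_toSubgraph]
        have hyv : y' ∈ (SimpleGraph.Walk.cons h q).toSubgraph.verts := by
          simp [SimpleGraph.Walk.mem_verts_toSubgraph, hs]
        have := hind hav hyv hadj
        simp only [SimpleGraph.Walk.toSubgraph, SimpleGraph.Subgraph.sup_adj] at this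
        rcases this with hthis | hthis
        · rw [SimpleGraph.subgraphOfAdj_adj, Sym2.eq_iff] at hthis
          rcases hthis with ⟨-, h2⟩ | ⟨h1, -⟩
          · rw [h2] at hyC; exact hyC hy'
          · exact hane h1
        · have : x₀ ∈ q.toSubgraph.verts := hthis.fst_mem
          rw [SimpleGraph.Walk.mem_verts_toSubgraph] at this
          exact hx₀ this
  intro u hu v hv w hw
  obtain ⟨p, hp, hind, hws⟩ := hw
  exact main p hp hind hu hv w hws
end

section
/- Let G be a finite connected graph, A, B nonempty disjoint monophonically convex subsets of V(G), a ∈ A, b ∈ B, and a = v₁, …, v_k = b a shortest a–b path. Then A and B are separable by monophonic half-spaces if and only if there exists 1 ≤ i < k such that cl(A ∪ {v₁, …, v_i}) and cl(B ∪ {v_{i+1}, …, v_k}) are separable by monophonic half-spaces. -/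
open Classical

variable {V : Type*}

open Paper

section Aux

variable {G : SimpleGraph V}

lemma subset_mHull (G : SimpleGraph V) (X : Set V) : X ⊆ mHull G X :=
  fun x hx => Set.mem_sInter.2 fun _ hC => hC.2 hx

lemma mHull_subset {C X : Set V} (hC : MConvex G C) (hXC : X ⊆ C) :
    mHull G X ⊆ C :=
  Set.sInter_subset_of_mem ⟨hC, hXC⟩

lemma induced_of_shortest : ∀ {a b : V} (p : G.Walk a b),
    (∀ q : G.Walk a b, p.length ≤ q.length) → p.toSubgraph.IsInduced := by
  intro a b p
  induction p with
  | nil =>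
    intro _ u hu v hv hadj
    simp only [SimpleGraph.Walk.toSubgraph, SimpleGraph.singletonSubgraph_verts,
      Set.mem_singleton_iff] at hu hv
    subst hu; subst hv
    exact absurd hadj (G.irrefl)
  | @cons a c b h' p' ih =>
    intro hshort
    have hshort' : ∀ q : G.Walk c b, p'.length ≤ q.length := by
      intro q
      have := hshort (SimpleGraph.Walk.cons h' q)
      simpa using this
    have hind' : p'.toSubgraph.IsInduced := fun _ hu _ hv hadj => ih hshort' hu hv hadj
    intro u hu v hv hadj
    simp only [SimpleGraph.Walk.toSubgraph, SimpleGraph.Subgraph.verts_sup,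
      SimpleGraph.subgraphOfAdj_verts, Set.mem_union, Set.mem_insert_iff,
      Set.mem_singleton_iff, SimpleGraph.Walk.mem_verts_toSubgraph] at hu hv
    -- normalize membership: u = a ∨ u ∈ p'.support
    have hc : c ∈ p'.support := p'.start_mem_support
    have hu' : u = a ∨ u ∈ p'.support := by
      rcases hu with (rfl | rfl) | hu
      · exact Or.inl rfl
      · exact Or.inr hc
      · exact Or.inr hu
    have hv' : v = a ∨ v ∈ p'.support := by
      rcases hv with (rfl | rfl) | hv
      · exact Or.inl rfl
      · exact Or.inr hc
      · exact Or.inr hv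
    show (G.subgraphOfAdj h' ⊔ p'.toSubgraph).Adj u v
    have key : ∀ w, G.Adj a w → w ∈ p'.support → w = c := by
      intro w haw hw
      by_contra hwc
      have hlen := hshort (SimpleGraph.Walk.cons haw (p'.dropUntil w hw))
      have hsplit : (p'.takeUntil w hw).length + (p'.dropUntil w hw).length = p'.length := by
        have := SimpleGraph.Walk.take_spec p' hw
        conv_rhs => rw [← this]
        rw [SimpleGraph.Walk.length_append]
      simp only [SimpleGraph.Walk.length_cons] at hlen
      have : (p'.takeUntil w hw).length = 0 := by omega
      exact hwc ((SimpleGraph.Walk.eq_of_length_eq_zero this).symm)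
    rcases hu' with rfl | hu'
    · rcases hv' with rfl | hv'
      · exact absurd hadj (G.irrefl)
      · have : v = c := key v hadj hv'
        subst this
        exact Or.inl (by simp)
    · rcases hv' with rfl | hv'
      · have : u = c := key u hadj.symm hu'
        subst this
        exact Or.inl (by simp)
      · exact Or.inr (hind' (p'.mem_verts_toSubgraph.2 hu') (p'.mem_verts_toSubgraph.2 hv') hadj)

lemma mem_takeUntil_unique {a b y : V} (p : G.Walk a b) (hp : p.IsPath)
    (hy : y ∈ p.support) {u : V}
    (h1 : u ∈ (p.takeUntil y hy).support) (h2 : u ∈ (p.dropUntil y hy).support) : u = y := by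
  have hsplit : p.support = (p.takeUntil y hy).support ++ (p.dropUntil y hy).support.tail := by
    conv_lhs => rw [← SimpleGraph.Walk.take_spec p hy]
    exact SimpleGraph.Walk.support_append _ _
  have hnd := hp.support_nodup
  rw [hsplit, List.nodup_append] at hnd
  by_contra hne
  have : u ∈ (p.dropUntil y hy).support.tail := by
    have := (p.dropUntil y hy).support_eq_cons
    rw [this] at h2
    rcases List.mem_cons.1 h2 with h2 | h2
    · exact absurd h2 hne
    · exact h2
  exact hnd.2.2 u h1 u this rfl

lemma takeUntil_induced {a b y : V} (p : G.Walk a b) (hp : p.IsPath)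
    (hind : p.toSubgraph.IsInduced) (hy : y ∈ p.support) :
    (p.takeUntil y hy).toSubgraph.IsInduced := by
  intro u hu v hv hadj
  rw [SimpleGraph.Walk.mem_verts_toSubgraph] at hu hv
  have hup : u ∈ p.support := p.support_takeUntil_subset hy hu
  have hvp : v ∈ p.support := p.support_takeUntil_subset hy hv
  have hpadj : p.toSubgraph.Adj u v :=
    hind (p.mem_verts_toSubgraph.2 hup) (p.mem_verts_toSubgraph.2 hvp) hadj
  have hedge : s(u, v) ∈ p.edges := p.mem_edges_toSubgraph.1 hpadj
  have hsplit : p.edges = (p.takeUntil y hy).edges ++ (p.dropUntil y hy).edges := by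
    conv_lhs => rw [← SimpleGraph.Walk.take_spec p hy]
    exact SimpleGraph.Walk.edges_append _ _
  rw [hsplit, List.mem_append] at hedge
  rcases hedge with hedge | hedge
  · exact (SimpleGraph.Walk.mem_edges_toSubgraph _).2 hedge
  · exfalso
    have hud : u ∈ (p.dropUntil y hy).support :=
      SimpleGraph.Walk.fst_mem_support_of_mem_edges _ hedge
    have hvd : v ∈ (p.dropUntil y hy).support :=
      SimpleGraph.Walk.snd_mem_support_of_mem_edges _ hedge
    have h1 := mem_takeUntil_unique p hp hy hu hud
    have h2 := mem_takeUntil_unique p hp hy hv hvd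
    subst h1; subst h2
    exact G.irrefl hadj

lemma cons_induced_tail {a c b : V} (h : G.Adj a c) (p' : G.Walk c b)
    (hp : (SimpleGraph.Walk.cons h p').IsPath)
    (hind : (SimpleGraph.Walk.cons h p').toSubgraph.IsInduced) :
    p'.toSubgraph.IsInduced := by
  have hna : a ∉ p'.support := ((SimpleGraph.Walk.cons_isPath_iff h p').1 hp).2
  intro u hu v hv hadj
  rw [SimpleGraph.Walk.mem_verts_toSubgraph] at hu hv
  have hu' : u ∈ (SimpleGraph.Walk.cons h p').toSubgraph.verts := by
    rw [SimpleGraph.Walk.mem_verts_toSubgraph, SimpleGraph.Walk.support_cons]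
    exact List.mem_cons_of_mem _ hu
  have hv' : v ∈ (SimpleGraph.Walk.cons h p').toSubgraph.verts := by
    rw [SimpleGraph.Walk.mem_verts_toSubgraph, SimpleGraph.Walk.support_cons]
    exact List.mem_cons_of_mem _ hv
  have := hind hu' hv' hadj
  rcases this with hl | hr
  · exfalso
    rw [SimpleGraph.subgraphOfAdj_adj, Sym2.eq_iff] at hl
    rcases hl with ⟨rfl, rfl⟩ | ⟨rfl, rfl⟩
    · exact hna hu
    · exact hna hv
  · exact hr

lemma cross_lemma (H : Set V) (hH : MConvex G H) :
    ∀ {a b : V} (p : G.Walk a b), p.IsPath → p.toSubgraph.IsInduced → a ∈ H →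
      ∃ i, 1 ≤ i ∧ (∀ x ∈ p.support.take i, x ∈ H) ∧ (∀ x ∈ p.support.drop i, x ∉ H) := by
  intro a b p
  induction p with
  | nil =>
    intro _ _ haH
    exact ⟨1, le_refl 1, by simpa using haH, by simp⟩
  | @cons a c b h' p' ih =>
    intro hp hind haH
    have hp' : p'.IsPath := ((SimpleGraph.Walk.cons_isPath_iff h' p').1 hp).1
    have hna : a ∉ p'.support := ((SimpleGraph.Walk.cons_isPath_iff h' p').1 hp).2
    have hind' : p'.toSubgraph.IsInduced := cons_induced_tail h' p' hp hind
    by_cases hcH : c ∈ H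
    · obtain ⟨i, hi1, ht, hd⟩ := ih hp' hind' hcH
      refine ⟨i + 1, by omega, ?_, ?_⟩
      · intro x hx
        rw [SimpleGraph.Walk.support_cons, List.take_succ_cons] at hx
        rcases List.mem_cons.1 hx with rfl | hx
        · exact haH
        · exact ht x hx
      · intro x hx
        rw [SimpleGraph.Walk.support_cons, List.drop_succ_cons] at hx
        exact hd x hx
    · refine ⟨1, le_refl 1, ?_, ?_⟩
      · intro x hx
        rw [SimpleGraph.Walk.support_cons] at hx
        have h1 : (a :: p'.support).take 1 = [a] := rfl
        rw [h1, List.mem_singleton] at hx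
        subst hx; exact haH
      · intro y hy hyH
        rw [SimpleGraph.Walk.support_cons, List.drop_succ_cons, List.drop_zero] at hy
        -- y ∈ p'.support ∩ H; derive c ∈ H, contradiction
        apply hcH
        have hya : y ≠ a := fun h => hna (h ▸ hy)
        -- the walk cons h' (p'.takeUntil y hy) is an induced path from a to y containing c
        set q : G.Walk a y := SimpleGraph.Walk.cons h' (p'.takeUntil y hy) with hq
        have hqpath : q.IsPath := by
          rw [hq, SimpleGraph.Walk.cons_isPath_iff]
          exact ⟨hp'.takeUntil hy, fun hmem => hna (p'.support_takeUntil_subset hy hmem)⟩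
        have htind : (p'.takeUntil y hy).toSubgraph.IsInduced :=
          takeUntil_induced p' hp' hind' hy
        have hqind : q.toSubgraph.IsInduced := by
          intro u hu v hv hadj
          rw [hq, SimpleGraph.Walk.mem_verts_toSubgraph, SimpleGraph.Walk.support_cons,
            List.mem_cons] at hu hv
          show (G.subgraphOfAdj h' ⊔ (p'.takeUntil y hy).toSubgraph).Adj u v
          have case2 : ∀ {u v : V}, u ∈ (p'.takeUntil y hy).support →
              v ∈ (p'.takeUntil y hy).support → G.Adj u v →
              (G.subgraphOfAdj h' ⊔ (p'.takeUntil y hy).toSubgraph).Adj u v := by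
            intro u v hu hv hadj
            exact Or.inr (htind ((p'.takeUntil y hy).mem_verts_toSubgraph.2 hu)
              ((p'.takeUntil y hy).mem_verts_toSubgraph.2 hv) hadj)
          rcases hu with rfl | hu
          · rcases hv with rfl | hv
            · exact absurd hadj (G.irrefl)
            · -- u = a, v ∈ take.support ⊆ p'.support
              have hvp : v ∈ p'.support := p'.support_takeUntil_subset hy hv
              have := hind (by rw [SimpleGraph.Walk.mem_verts_toSubgraph,
                  SimpleGraph.Walk.support_cons]; exact List.mem_cons_self)
                (by rw [SimpleGraph.Walk.mem_verts_toSubgraph, SimpleGraph.Walk.support_cons]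
                    exact List.mem_cons_of_mem _ hvp) hadj
              rcases this with hl | hr
              · exact Or.inl hl
              · exact absurd hr.fst_mem (by rw [SimpleGraph.Walk.mem_verts_toSubgraph]; exact hna)
          · rcases hv with rfl | hv
            · have hup : u ∈ p'.support := p'.support_takeUntil_subset hy hu
              have := hind (by rw [SimpleGraph.Walk.mem_verts_toSubgraph,
                  SimpleGraph.Walk.support_cons]; exact List.mem_cons_of_mem _ hup)
                (by rw [SimpleGraph.Walk.mem_verts_toSubgraph, SimpleGraph.Walk.support_cons]
                    exact List.mem_cons_self) hadj
              rcases this with hl | hr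
              · exact Or.inl hl
              · exact absurd hr.snd_mem (by rw [SimpleGraph.Walk.mem_verts_toSubgraph]; exact hna)
            · exact case2 hu hv hadj
        have hcq : c ∈ q.support := by
          rw [hq, SimpleGraph.Walk.support_cons]
          exact List.mem_cons_of_mem _ (p'.takeUntil y hy).start_mem_support
        exact hH a haH y hyH ⟨q, hqpath, hqind, hcq⟩

end Aux

theorem stmt_5 [Fintype V] (G : SimpleGraph V) (hG : G.Connected)
    (A B : Set V) (hA : A.Nonempty) (hB : B.Nonempty) (hAB : Disjoint A B)
    (hAc : MConvex G A) (hBc : MConvex G B)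
    (a b : V) (ha : a ∈ A) (hb : b ∈ B)
    (p : G.Walk a b) (hp : p.IsPath)
    (hshort : ∀ q : G.Walk a b, p.length ≤ q.length) :
    Sep G A B ↔ ∃ i, 1 ≤ i ∧ i < p.support.length ∧
      Sep G (mHull G (A ∪ {x | x ∈ p.support.take i}))
            (mHull G (B ∪ {x | x ∈ p.support.drop i})) := by
  constructor
  · rintro ⟨H, hHconv, hHcconv, hAH, hBHc⟩
    have hind : p.toSubgraph.IsInduced := induced_of_shortest p hshort
    obtain ⟨i, hi1, htake, hdrop⟩ := cross_lemma H hHconv p hp hind (hAH ha)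
    have hilt : i < p.support.length := by
      by_contra hle
      push_neg at hle
      have hbH : b ∈ H := htake b (by rw [List.take_of_length_le hle]; exact p.end_mem_support)
      exact hBHc hb hbH
    refine ⟨i, hi1, hilt, H, hHconv, hHcconv, ?_, ?_⟩
    · apply mHull_subset hHconv
      rintro x (hx | hx)
      · exact hAH hx
      · exact htake x hx
    · apply mHull_subset hHcconv
      rintro x (hx | hx)
      · exact hBHc hx
      · exact hdrop x hx
  · rintro ⟨i, _, _, H, hHconv, hHcconv, hAH, hBHc⟩
    refine ⟨H, hHconv, hHcconv, ?_, ?_⟩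
    · exact fun x hx => hAH (subset_mHull G _ (Or.inl hx))
    · exact fun x hx => hBHc (subset_mHull G _ (Or.inl hx))
end

section
/- The monophonic convexity of a finite connected graph G that is not a complete graph has Carathéodory number 2: for every X ⊆ V(G) and v ∈ cl(X), there exists Y ⊆ X with |Y| ≤ 2 and v ∈ cl(Y). -/
open Classical

variable {V : Type*}

open Paper


namespace CarAux

open Paper SimpleGraph Walk

variable {G : SimpleGraph V}

/-! ### basic hull API -/

lemma mconvex_mHull (G : SimpleGraph V) (X : Set V) : MConvex G (mHull G X) := by
  intro u hu v hv w hw C hC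
  exact hC.1 u (hu C hC) v (hv C hC) hw

lemma subset_mHull (G : SimpleGraph V) (X : Set V) : X ⊆ mHull G X := by
  intro x hx C hC; exact hC.2 hx

lemma mHull_min {X C : Set V} (h1 : X ⊆ C) (h2 : MConvex G C) : mHull G X ⊆ C :=
  fun _ hx => hx C ⟨h2, h1⟩

lemma mHull_mono {X Y : Set V} (h : X ⊆ Y) : mHull G X ⊆ mHull G Y :=
  mHull_min (h.trans (subset_mHull G Y)) (mconvex_mHull G Y)

lemma mem_mInterval {u v t : V} (p : G.Walk u v) (hp : p.IsPath)
    (hi : p.toSubgraph.IsInduced) (ht : t ∈ p.support) : t ∈ mInterval G u v :=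
  ⟨p, hp, hi, ht⟩

lemma toSubgraph_adj_iff_mem_edges {u v x y : V} (p : G.Walk u v) :
    p.toSubgraph.Adj x y ↔ s(x, y) ∈ p.edges := by
  rw [← Subgraph.mem_edgeSet, mem_edges_toSubgraph]

lemma chord_mem_edges {u v x y : V} {p : G.Walk u v} (hi : p.toSubgraph.IsInduced)
    (hx : x ∈ p.support) (hy : y ∈ p.support) (hadj : G.Adj x y) : s(x, y) ∈ p.edges := by
  rw [← toSubgraph_adj_iff_mem_edges]
  exact hi ((p.mem_verts_toSubgraph).2 hx) ((p.mem_verts_toSubgraph).2 hy) hadj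

lemma edge_of_length_one {x y : V} (w : G.Walk x y) (h : w.length = 1) :
    s(x, y) ∈ w.edges := by
  cases w with
  | nil => simp at h
  | cons h' r =>
    cases r with
    | nil => simp
    | cons h'' r' => simp [Walk.length_cons] at h

/-! ### existence of induced paths inside a vertex set -/

lemma exists_induced_aux : ∀ (k : ℕ) {u v : V} (p : G.Walk u v), p.length ≤ k →
    ∃ q : G.Walk u v, q.IsPath ∧ q.toSubgraph.IsInduced ∧
      (∀ x ∈ q.support, x ∈ p.support) := by
  intro k
  induction k with
  | zero =>
    intro u v p hl
    have h0 : p.length = 0 := Nat.le_zero.1 hl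
    obtain rfl : u = v := Walk.eq_of_length_eq_zero h0
    refine ⟨Walk.nil, Walk.IsPath.nil, ?_, ?_⟩
    · intro a ha b hb hadj
      simp only [Walk.toSubgraph, SimpleGraph.singletonSubgraph_verts, Set.mem_singleton_iff]
        at ha hb
      exact absurd (ha.trans hb.symm) hadj.ne
    · intro x hx
      simp only [Walk.support_nil, List.mem_singleton] at hx
      rw [hx]
      exact Walk.start_mem_support p
  | succ k ih =>
    intro u v p hl
    by_cases hind : p.bypass.toSubgraph.IsInduced
    · exact ⟨p.bypass, p.bypass_isPath, hind, fun x hx => p.support_bypass_subset hx⟩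
    · have hnot : ¬ ∀ {x y : V}, x ∈ p.bypass.toSubgraph.verts → y ∈ p.bypass.toSubgraph.verts
          → G.Adj x y → p.bypass.toSubgraph.Adj x y := fun h => hind fun _ hx _ hy hxy => h hx hy hxy
      push_neg at hnot
      obtain ⟨x, y, hx, hy, hadj, hnadj⟩ := hnot
      rw [mem_verts_toSubgraph] at hx hy
      set p' := p.bypass with hp'def
      have hp' : p'.IsPath := p.bypass_isPath
      have hlen' : p'.length ≤ k + 1 := le_trans p.length_bypass_le hl
      have hxny : x ≠ y := hadj.ne
      have hne : s(x, y) ∉ p'.edges := by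
        intro hmem
        exact hnadj ((toSubgraph_adj_iff_mem_edges p').2 hmem)
      have hy2 : y ∈ (p'.takeUntil x hx).support ∨ y ∈ (p'.dropUntil x hx).support := by
        rw [← Walk.mem_support_append_iff, Walk.take_spec p' hx]
        exact hy
      have hsplitlen : (p'.takeUntil x hx).length + (p'.dropUntil x hx).length = p'.length := by
        rw [← Walk.length_append, Walk.take_spec p' hx]
      rcases hy2 with hy1 | hy2
      · set p₁ := p'.takeUntil x hx with hp₁
        set p₂ := p'.dropUntil x hx with hp₂
        have hsplit2 : (p₁.takeUntil y hy1).length + (p₁.dropUntil y hy1).length = p₁.length := by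
          rw [← Walk.length_append, Walk.take_spec p₁ hy1]
        have hdlen : 2 ≤ (p₁.dropUntil y hy1).length := by
          rcases Nat.lt_or_ge (p₁.dropUntil y hy1).length 2 with hlt | hge
          · interval_cases h : (p₁.dropUntil y hy1).length
            · exact absurd (Walk.eq_of_length_eq_zero h) hxny.symm
            · exfalso
              apply hne
              have := edge_of_length_one (p₁.dropUntil y hy1) h
              have h2 : s(y, x) ∈ p₁.edges := (p₁.edges_dropUntil_subset hy1) this
              have h3 : s(y, x) ∈ p'.edges := (p'.edges_takeUntil_subset hx) h2
              rwa [Sym2.eq_swap] at h3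
          · exact hge
        set q : G.Walk u v := (p₁.takeUntil y hy1).append (Walk.cons hadj.symm p₂) with hq
        have hqlen : q.length ≤ k := by
          have : q.length = (p₁.takeUntil y hy1).length + (1 + p₂.length) := by
            rw [hq, Walk.length_append, Walk.length_cons]
            omega
          omega
        obtain ⟨r, hr1, hr2, hr3⟩ := ih q hqlen
        refine ⟨r, hr1, hr2, fun t ht => ?_⟩
        have := hr3 t ht
        rw [hq, Walk.mem_support_append_iff] at this
        rcases this with h | h
        · exact p.support_bypass_subset
            (p'.support_takeUntil_subset hx (p₁.support_takeUntil_subset hy1 h))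
        · rw [Walk.support_cons] at h
          rcases List.mem_cons.1 h with h | h
          · rw [h]
            exact p.support_bypass_subset hy
          · exact p.support_bypass_subset (p'.support_dropUntil_subset hx h)
      · set p₁ := p'.takeUntil x hx with hp₁
        set p₂ := p'.dropUntil x hx with hp₂
        have hsplit2 : (p₂.takeUntil y hy2).length + (p₂.dropUntil y hy2).length = p₂.length := by
          rw [← Walk.length_append, Walk.take_spec p₂ hy2]
        have hdlen : 2 ≤ (p₂.takeUntil y hy2).length := by
          rcases Nat.lt_or_ge (p₂.takeUntil y hy2).length 2 with hlt | hge
          · interval_cases h : (p₂.takeUntil y hy2).length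
            · exact absurd (Walk.eq_of_length_eq_zero h) hxny
            · exfalso
              apply hne
              have := edge_of_length_one (p₂.takeUntil y hy2) h
              have h2 : s(x, y) ∈ p₂.edges := (p₂.edges_takeUntil_subset hy2) this
              exact (p'.edges_dropUntil_subset hx) h2
          · exact hge
        set q : G.Walk u v := p₁.append (Walk.cons hadj (p₂.dropUntil y hy2)) with hq
        have hqlen : q.length ≤ k := by
          have : q.length = p₁.length + (1 + (p₂.dropUntil y hy2).length) := by
            rw [hq, Walk.length_append, Walk.length_cons]
            omega
          omega
        obtain ⟨r, hr1, hr2, hr3⟩ := ih q hqlen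
        refine ⟨r, hr1, hr2, fun t ht => ?_⟩
        have := hr3 t ht
        rw [hq, Walk.mem_support_append_iff] at this
        rcases this with h | h
        · exact p.support_bypass_subset (p'.support_takeUntil_subset hx h)
        · rw [Walk.support_cons] at h
          rcases List.mem_cons.1 h with h | h
          · rw [h]
            exact p.support_bypass_subset hx
          · exact p.support_bypass_subset
              (p'.support_dropUntil_subset hx (p₂.support_dropUntil_subset hy2 h))

lemma exists_induced {W : Set V} {u v : V} (p : G.Walk u v)
    (hp : ∀ x ∈ p.support, x ∈ W) :
    ∃ q : G.Walk u v, q.IsPath ∧ q.toSubgraph.IsInduced ∧ ∀ x ∈ q.support, x ∈ W := by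
  obtain ⟨q, h1, h2, h3⟩ := exists_induced_aux p.length p le_rfl
  exact ⟨q, h1, h2, fun x hx => hp x (h3 x hx)⟩

/-! ### small path lemmas -/

lemma path_loop_eq_nil {u : V} (p : G.Walk u u) (hp : p.IsPath) : p = Walk.nil := by
  cases p with
  | nil => rfl
  | cons h q =>
    rw [Walk.cons_isPath_iff] at hp
    exact absurd (Walk.end_mem_support q) hp.2

lemma support_loop {u t : V} (p : G.Walk u u) (hp : p.IsPath) (ht : t ∈ p.support) : t = u := by
  rw [path_loop_eq_nil p hp] at ht
  simpa using ht

lemma support_subset_of_edge_mem {u v : V} (p : G.Walk u v) (hp : p.IsPath)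
    (he : s(u, v) ∈ p.edges) : ∀ t ∈ p.support, t = u ∨ t = v := by
  cases p with
  | nil => simp at he
  | cons h q =>
    rename_i b
    rw [Walk.edges_cons, List.mem_cons] at he
    rcases he with he | he
    · have : (u = u ∧ v = b) ∨ (u = b ∧ v = u) := by
        rwa [Sym2.eq_iff] at he
      rcases this with ⟨-, rfl⟩ | ⟨hub, -⟩
      · have hq : q = Walk.nil := path_loop_eq_nil q ((Walk.cons_isPath_iff _ _).1 hp).1
        subst hq
        intro t ht
        simpa using ht
      · exact absurd hub.symm h.ne.symm
    · have : u ∈ q.support := Walk.fst_mem_support_of_mem_edges q he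
      exact absurd this ((Walk.cons_isPath_iff _ _).1 hp).2

lemma mInterval_loop {u t : V} (ht : t ∈ mInterval G u u) : t = u := by
  obtain ⟨p, hp, -, hts⟩ := ht
  exact support_loop p hp hts

lemma mInterval_adj {u v t : V} (h : G.Adj u v) (ht : t ∈ mInterval G u v) :
    t = u ∨ t = v := by
  obtain ⟨p, hp, hi, hts⟩ := ht
  exact support_subset_of_edge_mem p hp
    (chord_mem_edges hi (Walk.start_mem_support p) (Walk.end_mem_support p) h) t hts

lemma clique_mconvex {K : Set V} (hK : Paper.IsClique G K) : MConvex G K := by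
  intro u hu v hv t ht
  by_cases huv : u = v
  · subst huv
    rw [mInterval_loop ht]; exact hu
  · rcases mInterval_adj (hK u hu v hv huv) ht with rfl | rfl
    · exact hu
    · exact hv

lemma eq_mid_of_mem_both {u m w : V} {p₁ : G.Walk u m} {p₂ : G.Walk m w}
    (hp : (p₁.append p₂).IsPath) {a : V} (h1 : a ∈ p₁.support) (h2 : a ∈ p₂.support) :
    a = m := by
  have hnd := hp.support_nodup
  rw [Walk.support_append, List.nodup_append] at hnd
  have hdisj := hnd.2.2
  rcases (by rw [p₂.support_eq_cons] at h2; exact List.mem_cons.1 h2 : a = m ∨ a ∈ p₂.support.tail)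
    with h | h
  · exact h
  · exact absurd rfl (hdisj a h1 a h)

lemma induced_of_append_left {u m w : V} {p₁ : G.Walk u m} {p₂ : G.Walk m w}
    (hp : (p₁.append p₂).IsPath) (hi : (p₁.append p₂).toSubgraph.IsInduced) :
    p₁.toSubgraph.IsInduced := by
  intro a ha b hb hadj
  rw [mem_verts_toSubgraph] at ha hb
  have h2 : (p₁.append p₂).toSubgraph.Adj a b := by
    apply hi _ _ hadj <;> rw [mem_verts_toSubgraph, Walk.mem_support_append_iff]
    · exact Or.inl ha
    · exact Or.inl hb
  rw [Walk.toSubgraph_append, Subgraph.sup_adj] at h2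
  rcases h2 with h2 | h2
  · exact h2
  · have he : s(a, b) ∈ p₂.edges := (toSubgraph_adj_iff_mem_edges p₂).1 h2
    have ha2 : a ∈ p₂.support := Walk.fst_mem_support_of_mem_edges p₂ he
    have hb2 : b ∈ p₂.support := Walk.snd_mem_support_of_mem_edges p₂ he
    have ham : a = m := eq_mid_of_mem_both hp ha ha2
    have hbm : b = m := eq_mid_of_mem_both hp hb hb2
    exact absurd (ham.trans hbm.symm) hadj.ne

lemma induced_of_append_right {u m w : V} {p₁ : G.Walk u m} {p₂ : G.Walk m w}
    (hp : (p₁.append p₂).IsPath) (hi : (p₁.append p₂).toSubgraph.IsInduced) :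
    p₂.toSubgraph.IsInduced := by
  intro a ha b hb hadj
  rw [mem_verts_toSubgraph] at ha hb
  have h2 : (p₁.append p₂).toSubgraph.Adj a b := by
    apply hi _ _ hadj <;> rw [mem_verts_toSubgraph, Walk.mem_support_append_iff]
    · exact Or.inr ha
    · exact Or.inr hb
  rw [Walk.toSubgraph_append, Subgraph.sup_adj] at h2
  rcases h2 with h2 | h2
  · have he : s(a, b) ∈ p₁.edges := (toSubgraph_adj_iff_mem_edges p₁).1 h2
    have ha2 : a ∈ p₁.support := Walk.fst_mem_support_of_mem_edges p₁ he
    have hb2 : b ∈ p₁.support := Walk.snd_mem_support_of_mem_edges p₁ he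
    have ham : a = m := eq_mid_of_mem_both hp ha2 ha
    have hbm : b = m := eq_mid_of_mem_both hp hb2 hb
    exact absurd (ham.trans hbm.symm) hadj.ne
  · exact h2

lemma append_induced {u m w : V} (p : G.Walk u m) (r : G.Walk m w)
    (hp : p.IsPath) (hr : r.IsPath)
    (hpi : p.toSubgraph.IsInduced) (hri : r.toSubgraph.IsInduced)
    (hdisj : ∀ x ∈ p.support, x ∈ r.support → x = m)
    (hcross : ∀ x ∈ p.support, ∀ y ∈ r.support, x ≠ m → y ≠ m → ¬ G.Adj x y) :
    (p.append r).IsPath ∧ (p.append r).toSubgraph.IsInduced := by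
  have hrn := hr.support_nodup
  have hrcons := r.support_eq_cons
  have hmtail : m ∉ r.support.tail ∧ r.support.tail.Nodup := by
    rw [hrcons] at hrn
    exact List.nodup_cons.1 hrn
  constructor
  · rw [Walk.isPath_def, Walk.support_append, List.nodup_append]
    refine ⟨hp.support_nodup, hmtail.2, ?_⟩
    intro a ha c hatail hac
    rw [← hac] at hatail
    have ha2 : a ∈ r.support := by rw [hrcons]; exact List.mem_cons_of_mem _ hatail
    have ham : a = m := hdisj a ha ha2
    rw [ham] at hatail
    exact hmtail.1 hatail
  · intro a ha b hb hadj
    rw [mem_verts_toSubgraph, Walk.mem_support_append_iff] at ha hb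
    rw [Walk.toSubgraph_append, Subgraph.sup_adj]
    have mkp : ∀ x y : V, x ∈ p.support → y ∈ p.support → G.Adj x y →
        p.toSubgraph.Adj x y ∨ r.toSubgraph.Adj x y := fun x y hx hy hxy =>
      Or.inl (hpi ((p.mem_verts_toSubgraph).2 hx) ((p.mem_verts_toSubgraph).2 hy) hxy)
    have mkr : ∀ x y : V, x ∈ r.support → y ∈ r.support → G.Adj x y →
        p.toSubgraph.Adj x y ∨ r.toSubgraph.Adj x y := fun x y hx hy hxy =>
      Or.inr (hri ((r.mem_verts_toSubgraph).2 hx) ((r.mem_verts_toSubgraph).2 hy) hxy)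
    rcases ha with ha | ha <;> rcases hb with hb | hb
    · exact mkp a b ha hb hadj
    · by_cases ham : a = m
      · subst ham
        exact mkr a b (Walk.start_mem_support r) hb hadj
      · by_cases hbm : b = m
        · subst hbm
          exact mkp a b ha (Walk.end_mem_support p) hadj
        · exact absurd hadj (hcross a ha b hb ham hbm)
    · by_cases ham : a = m
      · subst ham
        exact mkp a b (Walk.end_mem_support p) hb hadj
      · by_cases hbm : b = m
        · subst hbm
          exact mkr a b ha (Walk.start_mem_support r) hadj
        · exact absurd hadj.symm (hcross b hb a ha hbm ham)
    · exact mkr a b ha hb hadj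

/-! ### scanning lemmas -/

lemma exists_exit {Z : Set V} : ∀ {a v : V} (q : G.Walk a v), a ∈ Z → v ∉ Z →
    ∃ b ∈ q.support, b ∉ Z ∧ ∃ z ∈ Z, G.Adj z b := by
  intro a v q
  induction q with
  | nil => intro h1 h2; exact absurd h1 h2
  | cons h r ih =>
    rename_i x c w
    intro h1 h2
    by_cases hc : c ∈ Z
    · obtain ⟨b, hb1, hb2⟩ := ih hc h2
      exact ⟨b, by rw [Walk.support_cons]; exact List.mem_cons_of_mem _ hb1, hb2⟩
    · refine ⟨c, ?_, hc, x, h1, h⟩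
      rw [Walk.support_cons]
      exact List.mem_cons_of_mem _ (Walk.start_mem_support r)

lemma scan {Z : Set V} : ∀ {u v : V} (p : G.Walk u v), p.IsPath → u ∉ Z → v ∉ Z →
    (∃ w ∈ p.support, w ∈ Z) →
    ∃ b₁ b₂, b₁ ∈ p.support ∧ b₂ ∈ p.support ∧
      (b₁ ∉ Z ∧ ∃ z ∈ Z, G.Adj z b₁) ∧ (b₂ ∉ Z ∧ ∃ z ∈ Z, G.Adj z b₂) ∧
      b₁ ≠ b₂ ∧ s(b₁, b₂) ∉ p.edges := by
  intro u v p
  induction p with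
  | nil =>
    intro _ hu _ hw
    obtain ⟨w, hw1, hw2⟩ := hw
    simp only [Walk.support_nil, List.mem_singleton] at hw1
    rw [hw1] at hw2
    exact absurd hw2 hu
  | cons h r ih =>
    rename_i x a w
    intro hp hu hv hw
    have hpr : r.IsPath := ((Walk.cons_isPath_iff _ _).1 hp).1
    have hxnr : x ∉ r.support := ((Walk.cons_isPath_iff _ _).1 hp).2
    by_cases ha : a ∈ Z
    · obtain ⟨b, hb1, hb2, z, hz, hzb⟩ := exists_exit r ha hv
      refine ⟨x, b, Walk.start_mem_support _,
        by rw [Walk.support_cons]; exact List.mem_cons_of_mem _ hb1,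
        ⟨hu, a, ha, h.symm⟩, ⟨hb2, z, hz, hzb⟩, ?_, ?_⟩
      · intro hxb; rw [hxb] at hxnr; exact hxnr hb1
      · intro hmem
        rw [Walk.edges_cons, List.mem_cons] at hmem
        rcases hmem with hmem | hmem
        · rw [Sym2.eq_iff] at hmem
          rcases hmem with ⟨-, hba⟩ | ⟨hxx, -⟩
          · rw [← hba] at ha; exact hb2 ha
          · exact hu (hxx ▸ ha)
        · exact hxnr (Walk.fst_mem_support_of_mem_edges r hmem)
    · have hw' : ∃ w ∈ r.support, w ∈ Z := by
        obtain ⟨t, ht1, ht2⟩ := hw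
        rw [Walk.support_cons, List.mem_cons] at ht1
        rcases ht1 with rfl | ht1
        · exact absurd ht2 hu
        · exact ⟨t, ht1, ht2⟩
      obtain ⟨b₁, b₂, h1, h2, h3, h4, h5, h6⟩ := ih hpr ha hv hw'
      refine ⟨b₁, b₂, by rw [Walk.support_cons]; exact List.mem_cons_of_mem _ h1,
        by rw [Walk.support_cons]; exact List.mem_cons_of_mem _ h2, h3, h4, h5, ?_⟩
      intro hmem
      rw [Walk.edges_cons, List.mem_cons] at hmem
      rcases hmem with hmem | hmem
      · have hxin : x = b₁ ∨ x = b₂ := by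
          rw [Sym2.eq_iff] at hmem
          rcases hmem with ⟨hb, -⟩ | ⟨-, hb⟩
          · exact Or.inl hb.symm
          · exact Or.inr hb.symm
        rcases hxin with rfl | rfl
        · exact hxnr h1
        · exact hxnr h2
      · exact h6 hmem

lemma prefix_split {Cs : Set V} : ∀ {u w : V} (p : G.Walk u w), u ∉ Cs → w ∈ Cs →
    ∃ (c₁ : V) (p₁ : G.Walk u c₁) (p₂ : G.Walk c₁ w), p = p₁.append p₂ ∧ c₁ ∈ Cs ∧
      (∀ t ∈ p₁.support, t ≠ c₁ → t ∉ Cs) ∧ 1 ≤ p₁.length := by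
  intro u w p
  induction p with
  | nil => intro h1 h2; exact absurd h2 h1
  | cons h r ih =>
    rename_i x a w
    intro h1 h2
    by_cases ha : a ∈ Cs
    · refine ⟨a, Walk.cons h Walk.nil, r, by simp, ha, ?_, by simp⟩
      intro t ht htne
      simp only [Walk.support_cons, Walk.support_nil, List.mem_cons, List.not_mem_nil,
        or_false] at ht
      rcases ht with rfl | rfl
      · exact h1
      · exact absurd rfl htne
    · obtain ⟨c₁, q₁, q₂, heq, hc, hts, hlen⟩ := ih ha h2
      refine ⟨c₁, Walk.cons h q₁, q₂, by rw [Walk.cons_append, ← heq], hc, ?_, by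
        rw [Walk.length_cons]; omega⟩
      intro t ht htne
      rw [Walk.support_cons, List.mem_cons] at ht
      rcases ht with rfl | ht
      · exact h1
      · exact hts t ht htne

lemma exists_penultimate : ∀ {u c : V} (p : G.Walk u c), p.IsPath → u ≠ c →
    ∃ t, G.Adj t c ∧ t ∈ p.support ∧ t ≠ c := by
  intro u c p
  induction p with
  | nil => intro _ h; exact absurd rfl h
  | cons h r ih =>
    rename_i x a c
    intro hp hne
    have hpr : r.IsPath := ((Walk.cons_isPath_iff _ _).1 hp).1
    by_cases hac : a = c
    · subst hac
      exact ⟨x, h, Walk.start_mem_support _, hne⟩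
    · obtain ⟨t, ht1, ht2, ht3⟩ := ih hpr hac
      exact ⟨t, ht1, by rw [Walk.support_cons]; exact List.mem_cons_of_mem _ ht2, ht3⟩

/-! ### reachability within a set -/

def Reach (G : SimpleGraph V) (D : Set V) (a b : V) : Prop :=
  ∃ p : G.Walk a b, ∀ x ∈ p.support, x ∈ D

lemma Reach.mem_left {D : Set V} {a b : V} (h : Reach G D a b) : a ∈ D := by
  obtain ⟨p, hp⟩ := h; exact hp a (Walk.start_mem_support p)

lemma Reach.mem_right {D : Set V} {a b : V} (h : Reach G D a b) : b ∈ D := by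
  obtain ⟨p, hp⟩ := h; exact hp b (Walk.end_mem_support p)

lemma reach_refl {D : Set V} {a : V} (h : a ∈ D) : Reach G D a a :=
  ⟨Walk.nil, by simpa using h⟩

lemma Reach.symm {D : Set V} {a b : V} (h : Reach G D a b) : Reach G D b a := by
  obtain ⟨p, hp⟩ := h
  exact ⟨p.reverse, fun x hx => hp x (by rwa [Walk.support_reverse, List.mem_reverse] at hx)⟩

lemma Reach.trans {D : Set V} {a b c : V} (h1 : Reach G D a b) (h2 : Reach G D b c) :
    Reach G D a c := by
  obtain ⟨p, hp⟩ := h1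
  obtain ⟨q, hq⟩ := h2
  refine ⟨p.append q, fun x hx => ?_⟩
  rw [Walk.mem_support_append_iff] at hx
  rcases hx with hx | hx
  · exact hp x hx
  · exact hq x hx

lemma Reach.step {D : Set V} {a b c : V} (h1 : Reach G D a b) (h2 : G.Adj b c) (h3 : c ∈ D) :
    Reach G D a c :=
  h1.trans ⟨Walk.cons h2 Walk.nil, by
    intro x hx
    simp only [Walk.support_cons, Walk.support_nil, List.mem_cons, List.not_mem_nil,
      or_false] at hx
    rcases hx with rfl | rfl
    · exact h1.mem_right
    · exact h3⟩

lemma reach_of_support {D : Set V} {a b t : V} {p : G.Walk a b}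
    (hp : ∀ x ∈ p.support, x ∈ D) (ht : t ∈ p.support) : Reach G D a t :=
  ⟨p.takeUntil t ht, fun x hx => hp x (p.support_takeUntil_subset ht hx)⟩

/-- the neighbourhood of a connected set attached to a convex set is a clique -/
lemma clique_of_attach {C S : Set V} (hC : MConvex G C) (hdisj : ∀ s ∈ S, s ∉ C)
    (hconn : ∀ s₁ ∈ S, ∀ s₂ ∈ S, Reach G S s₁ s₂) :
    ∀ q₁ ∈ C, ∀ q₂ ∈ C, (∃ s ∈ S, G.Adj s q₁) → (∃ s ∈ S, G.Adj s q₂) →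
      q₁ ≠ q₂ → G.Adj q₁ q₂ := by
  intro q₁ hq₁ q₂ hq₂ h1 h2 hne
  obtain ⟨s₁, hs₁, a₁⟩ := h1
  obtain ⟨s₂, hs₂, a₂⟩ := h2
  obtain ⟨wm, hwm⟩ := hconn s₁ hs₁ s₂ hs₂
  set w0 : G.Walk q₁ q₂ := Walk.cons a₁.symm (wm.append (Walk.cons a₂ Walk.nil)) with hw0
  have hsup : ∀ x ∈ w0.support, x ∈ S ∪ {q₁, q₂} := by
    intro t ht
    rw [hw0, Walk.support_cons, List.mem_cons] at ht
    rcases ht with rfl | ht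
    · exact Or.inr (Or.inl rfl)
    · rw [Walk.mem_support_append_iff] at ht
      rcases ht with ht | ht
      · exact Or.inl (hwm t ht)
      · simp only [Walk.support_cons, Walk.support_nil, List.mem_cons, List.not_mem_nil,
          or_false] at ht
        rcases ht with rfl | rfl
        · exact Or.inl hs₂
        · exact Or.inr (Or.inr rfl)
  obtain ⟨p, hp, hi, hps⟩ := exists_induced w0 hsup
  by_contra hna
  have hlen : p.length ≠ 0 := fun h0 => hne (Walk.eq_of_length_eq_zero h0)
  have hadj01 : p.toSubgraph.Adj (p.getVert 0) (p.getVert 1) :=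
    p.toSubgraph_adj_getVert (Nat.pos_of_ne_zero hlen)
  rw [p.getVert_zero] at hadj01
  set b := p.getVert 1 with hbdef
  have hedge : s(q₁, b) ∈ p.edges := (toSubgraph_adj_iff_mem_edges p).1 hadj01
  have hbsup : b ∈ p.support := Walk.snd_mem_support_of_mem_edges p hedge
  have hadjb : G.Adj q₁ b := hadj01.adj_sub
  rcases hps b hbsup with hbS | hb12
  · have : b ∈ mInterval G q₁ q₂ := mem_mInterval p hp hi hbsup
    exact hdisj b hbS (hC q₁ hq₁ q₂ hq₂ this)
  · rcases hb12 with hb | hb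
    · exact hadjb.ne hb.symm
    · exact hna (hb ▸ hadjb)

/-! ### the main decomposition step -/

lemma main_step (G : SimpleGraph V) (X : Set V) (x₀ : V) (hx₀X : x₀ ∈ X)
    (hx₀C : x₀ ∉ mHull G (X \ {x₀})) :
    ∃ Q : Set V, Q ⊆ mHull G (X \ {x₀}) ∧
      (∀ q₁ ∈ Q, ∀ q₂ ∈ Q, q₁ ≠ q₂ → G.Adj q₁ q₂) ∧
      mHull G X ⊆ mHull G (X \ {x₀}) ∪ mHull G ({x₀} ∪ Q) ∧
      mHull G ({x₀} ∪ Q) ⊆ mHull G X ∧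
      (∀ c ∈ mHull G (X \ {x₀}), c ∉ Q → c ∉ mHull G ({x₀} ∪ Q)) ∧
      (∀ q ∈ Q, ∃ xᵢ ∈ X \ {x₀}, q ∈ mHull G {x₀, xᵢ}) := by
  set X' := X \ {x₀} with hX'def
  set U := mHull G X with hUdef
  set C := mHull G X' with hCdef
  have hUconv : MConvex G U := mconvex_mHull G X
  have hCconv : MConvex G C := mconvex_mHull G X'
  have hCU : C ⊆ U := mHull_mono Set.diff_subset
  have hx₀U : x₀ ∈ U := subset_mHull G X hx₀X
  set S₀ : Set V := {t | Reach G (U \ C) x₀ t} with hS₀def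
  have hx₀S₀ : x₀ ∈ S₀ := reach_refl ⟨hx₀U, hx₀C⟩
  have hS₀sub : ∀ t ∈ S₀, t ∈ U \ C := fun t ht =>
    Reach.mem_right (show Reach G (U \ C) x₀ t from ht)
  have hS₀conn : ∀ s₁ ∈ S₀, ∀ s₂ ∈ S₀, Reach G S₀ s₁ s₂ := by
    intro s₁ h₁ s₂ h₂
    obtain ⟨p₁, hp₁⟩ := h₁
    obtain ⟨p₂, hp₂⟩ := h₂
    exact Reach.trans (Reach.symm ⟨p₁, fun x hx => reach_of_support hp₁ hx⟩)
      ⟨p₂, fun x hx => reach_of_support hp₂ hx⟩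
  set Q : Set V := {c | c ∈ C ∧ ∃ s ∈ S₀, G.Adj s c} with hQdef
  have hQC : Q ⊆ C := fun c hc => hc.1
  have hQclique : ∀ q₁ ∈ Q, ∀ q₂ ∈ Q, q₁ ≠ q₂ → G.Adj q₁ q₂ := by
    intro q₁ h₁ q₂ h₂ hne
    exact clique_of_attach hCconv (fun s hs => (hS₀sub s hs).2) hS₀conn q₁ h₁.1 q₂ h₂.1
      h₁.2 h₂.2 hne
  -- classification: support of an induced path inside U with endpoints in C ∪ S₀
  have hCL : ∀ (a b : V), a ∈ C ∪ S₀ → b ∈ C ∪ S₀ → ∀ (p : G.Walk a b), p.IsPath →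
      p.toSubgraph.IsInduced → (∀ t ∈ p.support, t ∈ U) → ∀ t ∈ p.support, t ∈ C ∪ S₀ := by
    intro a b hab hbb p hp hi hsup t ht
    by_cases htC : t ∈ C
    · exact Or.inl htC
    right
    by_contra htS₀
    set St : Set V := {z | Reach G (U \ C) t z} with hStdef
    have htSt : t ∈ St := reach_refl ⟨hsup t ht, htC⟩
    have hStsub : ∀ z ∈ St, z ∈ U \ C := fun z hz =>
      Reach.mem_right (show Reach G (U \ C) t z from hz)
    have hStconn : ∀ s₁ ∈ St, ∀ s₂ ∈ St, Reach G St s₁ s₂ := by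
      intro s₁ h₁ s₂ h₂
      obtain ⟨p₁, hp₁⟩ := h₁
      obtain ⟨p₂, hp₂⟩ := h₂
      exact Reach.trans (Reach.symm ⟨p₁, fun x hx => reach_of_support hp₁ hx⟩)
        ⟨p₂, fun x hx => reach_of_support hp₂ hx⟩
    have hend : ∀ e : V, e ∈ C ∪ S₀ → e ∉ St := by
      intro e he heSt
      rcases he with heC | heS₀
      · exact (hStsub e heSt).2 heC
      · exact htS₀ (Reach.trans heS₀ (Reach.symm heSt))
    obtain ⟨b₁, b₂, hb₁s, hb₂s, ⟨hb₁Z, z₁, hz₁, ha₁⟩, ⟨hb₂Z, z₂, hz₂, ha₂⟩, hbne, hnedge⟩ :=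
      scan p hp (hend a hab) (hend b hbb) ⟨t, ht, htSt⟩
    have hbC : ∀ bb : V, bb ∈ p.support → bb ∉ St → (∃ z ∈ St, G.Adj z bb) → bb ∈ C := by
      rintro bb hbs hbZ ⟨z, hz, hazb⟩
      by_contra hbbC
      exact hbZ (Reach.step hz hazb ⟨hsup bb hbs, hbbC⟩)
    have hadj12 : G.Adj b₁ b₂ := clique_of_attach hCconv (fun s hs => (hStsub s hs).2) hStconn
      b₁ (hbC b₁ hb₁s hb₁Z ⟨z₁, hz₁, ha₁⟩) b₂ (hbC b₂ hb₂s hb₂Z ⟨z₂, hz₂, ha₂⟩)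
      ⟨z₁, hz₁, ha₁⟩ ⟨z₂, hz₂, ha₂⟩ hbne
    exact hnedge (chord_mem_edges hi hb₁s hb₂s hadj12)
  have hCL2 : ∀ (a b : V), a ∈ S₀ ∪ Q → b ∈ S₀ ∪ Q → ∀ (p : G.Walk a b), p.IsPath →
      p.toSubgraph.IsInduced → (∀ t ∈ p.support, t ∈ C ∪ S₀) →
      ∀ t ∈ p.support, t ∈ C → t ∈ Q := by
    intro a b hab hbb p hp hi hsup t ht htC
    by_contra htQ
    have hend : ∀ e, e ∈ S₀ ∪ Q → e ∉ C \ Q := by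
      intro e he heZ
      rcases he with heS | heQ
      · exact (hS₀sub e heS).2 heZ.1
      · exact heZ.2 heQ
    obtain ⟨b₁, b₂, hb₁s, hb₂s, ⟨hb₁Z, z₁, hz₁, ha₁⟩, ⟨hb₂Z, z₂, hz₂, ha₂⟩, hbne, hnedge⟩ :=
      scan (Z := C \ Q) p hp (hend a hab) (hend b hbb) ⟨t, ht, htC, htQ⟩
    have hb₁Q : b₁ ∈ Q := by
      rcases hsup b₁ hb₁s with hbC2 | hbS
      · by_contra h
        exact hb₁Z ⟨hbC2, h⟩
      · exact absurd (⟨hz₁.1, b₁, hbS, ha₁.symm⟩ : z₁ ∈ Q) hz₁.2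
    have hb₂Q : b₂ ∈ Q := by
      rcases hsup b₂ hb₂s with hbC2 | hbS
      · by_contra h
        exact hb₂Z ⟨hbC2, h⟩
      · exact absurd (⟨hz₂.1, b₂, hbS, ha₂.symm⟩ : z₂ ∈ Q) hz₂.2
    exact hnedge (chord_mem_edges hi hb₁s hb₂s (hQclique b₁ hb₁Q b₂ hb₂Q hbne))
  have hCL3 : ∀ (a b : V), a ∈ C → b ∈ C → ∀ (p : G.Walk a b), p.IsPath →
      p.toSubgraph.IsInduced → (∀ t ∈ p.support, t ∈ C ∪ S₀) → ∀ t ∈ p.support, t ∈ C := by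
    intro a b ha hb p hp hi hsup t ht
    by_contra htC
    have htS : t ∈ S₀ := by
      rcases hsup t ht with h | h
      · exact absurd h htC
      · exact h
    have hend : ∀ e, e ∈ C → e ∉ S₀ := fun e he hs => (hS₀sub e hs).2 he
    obtain ⟨b₁, b₂, hb₁s, hb₂s, ⟨hb₁Z, z₁, hz₁, ha₁⟩, ⟨hb₂Z, z₂, hz₂, ha₂⟩, hbne, hnedge⟩ :=
      scan (Z := S₀) p hp (hend a ha) (hend b hb) ⟨t, ht, htS⟩
    have hb₁Q : b₁ ∈ Q := by
      have hbC2 : b₁ ∈ C := by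
        rcases hsup b₁ hb₁s with h | h
        · exact h
        · exact absurd h hb₁Z
      exact ⟨hbC2, z₁, hz₁, ha₁⟩
    have hb₂Q : b₂ ∈ Q := by
      have hbC2 : b₂ ∈ C := by
        rcases hsup b₂ hb₂s with h | h
        · exact h
        · exact absurd h hb₂Z
      exact ⟨hbC2, z₂, hz₂, ha₂⟩
    exact hnedge (chord_mem_edges hi hb₁s hb₂s (hQclique b₁ hb₁Q b₂ hb₂Q hbne))
  have hSQconv : MConvex G (S₀ ∪ Q) := by
    intro a ha b hb t ht
    obtain ⟨p, hp, hi, hts⟩ := ht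
    have hmemU : ∀ e, e ∈ S₀ ∪ Q → e ∈ U := by
      intro e he
      rcases he with h | h
      · exact (hS₀sub e h).1
      · exact hCU (hQC h)
    have hsupU : ∀ s ∈ p.support, s ∈ U :=
      fun s hs => hUconv a (hmemU a ha) b (hmemU b hb) (mem_mInterval p hp hi hs)
    have hCS : ∀ e, e ∈ S₀ ∪ Q → e ∈ C ∪ S₀ := by
      intro e he
      rcases he with h | h
      · exact Or.inr h
      · exact Or.inl (hQC h)
    have hsupCS := hCL a b (hCS a ha) (hCS b hb) p hp hi hsupU
    rcases hsupCS t hts with htC | htS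
    · exact Or.inr (hCL2 a b ha hb p hp hi hsupCS t hts htC)
    · exact Or.inl htS
  set W := mHull G ({x₀} ∪ Q) with hWdef
  have hx₀W : x₀ ∈ W := subset_mHull _ _ (Or.inl rfl)
  have hWU : W ⊆ U := by
    apply mHull_min _ hUconv
    intro z hz
    rcases hz with hz | hz
    · exact hz ▸ hx₀U
    · exact hCU (hQC hz)
  have hWSQ : W ⊆ S₀ ∪ Q := by
    apply mHull_min _ hSQconv
    intro z hz
    rcases hz with hz | hz
    · exact Or.inl (hz ▸ hx₀S₀)
    · exact Or.inr hz
  have hMixed : ∀ a, a ∈ W → a ∉ C → ∀ b, b ∈ C → ∀ (p : G.Walk a b), p.IsPath →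
      p.toSubgraph.IsInduced → ∀ t ∈ p.support, t ∈ C ∪ W := by
    intro a haW haC b hbC p hp hi t ht
    have haU : a ∈ U := hWU haW
    have hbU : b ∈ U := hCU hbC
    have hsupU : ∀ s ∈ p.support, s ∈ U :=
      fun s hs => hUconv a haU b hbU (mem_mInterval p hp hi hs)
    have haS₀ : a ∈ S₀ := by
      rcases hWSQ haW with h | h
      · exact h
      · exact absurd (hQC h) haC
    have hsupCS : ∀ s ∈ p.support, s ∈ C ∪ S₀ :=
      hCL a b (Or.inr haS₀) (Or.inl hbC) p hp hi hsupU
    obtain ⟨c₁, p₁, p₂, heq, hc₁C, hp₁t, hp₁len⟩ := prefix_split p haC hbC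
    subst heq
    have hp1 : p₁.IsPath := hp.of_append_left
    have hp2 : p₂.IsPath := hp.of_append_right
    have hi1 : p₁.toSubgraph.IsInduced := induced_of_append_left hp hi
    have hi2 : p₂.toSubgraph.IsInduced := induced_of_append_right hp hi
    have hane : a ≠ c₁ := fun h => haC (h ▸ hc₁C)
    obtain ⟨tst, hadjt, htsts, htstne⟩ := exists_penultimate p₁ hp1 hane
    have htstS₀ : tst ∈ S₀ := by
      have h2 : tst ∈ C ∪ S₀ :=
        hsupCS tst ((Walk.mem_support_append_iff _ _).2 (Or.inl htsts))
      rcases h2 with h2 | h2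
      · exact absurd h2 (hp₁t tst htsts htstne)
      · exact h2
    have hc₁Q : c₁ ∈ Q := ⟨hc₁C, tst, htstS₀, hadjt⟩
    have hc₁W : c₁ ∈ W := subset_mHull _ _ (Or.inr hc₁Q)
    have hp₁W : ∀ s ∈ p₁.support, s ∈ W := fun s hs =>
      (mconvex_mHull G ({x₀} ∪ Q)) a haW c₁ hc₁W (mem_mInterval p₁ hp1 hi1 hs)
    have hp₂C : ∀ s ∈ p₂.support, s ∈ C := hCL3 c₁ b hc₁C hbC p₂ hp2 hi2
      (fun s hs => hsupCS s ((Walk.mem_support_append_iff _ _).2 (Or.inr hs)))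
    rcases (Walk.mem_support_append_iff _ _).1 ht with h | h
    · exact Or.inr (hp₁W t h)
    · exact Or.inl (hp₂C t h)
  have hCWconv : MConvex G (C ∪ W) := by
    intro a ha b hb t ht
    obtain ⟨p, hp, hi, hts⟩ := ht
    by_cases haC : a ∈ C
    · by_cases hbC : b ∈ C
      · exact Or.inl (hCconv a haC b hbC ⟨p, hp, hi, hts⟩)
      · have hbW : b ∈ W := hb.resolve_left hbC
        have hi' : p.reverse.toSubgraph.IsInduced := by
          rw [Walk.toSubgraph_reverse]; exact hi
        exact hMixed b hbW hbC a haC p.reverse hp.reverse hi' t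
          (by rwa [Walk.support_reverse, List.mem_reverse])
    · have haW : a ∈ W := ha.resolve_left haC
      by_cases hbC : b ∈ C
      · exact hMixed a haW haC b hbC p hp hi t hts
      · have hbW : b ∈ W := hb.resolve_left hbC
        exact Or.inr ((mconvex_mHull G ({x₀} ∪ Q)) a haW b hbW ⟨p, hp, hi, hts⟩)
  have hUCW : U ⊆ C ∪ W := by
    apply mHull_min _ hCWconv
    intro x hx
    by_cases hxx : x = x₀
    · exact Or.inr (hxx ▸ hx₀W)
    · exact Or.inl (subset_mHull G X' ⟨hx, hxx⟩)
  have hKey : ∀ q ∈ Q, ∃ xᵢ ∈ X', q ∈ mHull G {x₀, xᵢ} := by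
    intro q hq
    set Z : Set V := {z | Reach G (C \ (Q \ {q})) q z} with hZdef
    have hqCQ' : q ∈ C \ (Q \ {q}) := ⟨hQC hq, fun h => h.2 rfl⟩
    have hqZ : q ∈ Z := reach_refl hqCQ'
    have hZsub : ∀ z ∈ Z, z ∈ C \ (Q \ {q}) := fun z hz =>
      Reach.mem_right (show Reach G (C \ (Q \ {q})) q z from hz)
    have hCZconv : MConvex G (C \ Z) := by
      intro a ha b hb t ht
      obtain ⟨p, hp, hi, hts⟩ := ht
      have hsupC : ∀ s ∈ p.support, s ∈ C := fun s hs => hCconv a ha.1 b hb.1 ⟨p, hp, hi, hs⟩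
      refine ⟨hsupC t hts, ?_⟩
      intro htZ
      obtain ⟨b₁, b₂, hb₁s, hb₂s, ⟨hb₁Z, z₁, hz₁, ha₁⟩, ⟨hb₂Z, z₂, hz₂, ha₂⟩, hbne, hnedge⟩ :=
        scan (Z := Z) p hp ha.2 hb.2 ⟨t, hts, htZ⟩
      have hb₁Q : b₁ ∈ Q \ {q} := by
        by_contra h
        exact hb₁Z (Reach.step hz₁ ha₁ ⟨hsupC b₁ hb₁s, h⟩)
      have hb₂Q : b₂ ∈ Q \ {q} := by
        by_contra h
        exact hb₂Z (Reach.step hz₂ ha₂ ⟨hsupC b₂ hb₂s, h⟩)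
      exact hnedge (chord_mem_edges hi hb₁s hb₂s (hQclique b₁ hb₁Q.1 b₂ hb₂Q.1 hbne))
    have hxex : ∃ xᵢ ∈ X', xᵢ ∈ Z := by
      by_contra h
      push_neg at h
      have h1 : X' ⊆ C \ Z := fun x hx => ⟨subset_mHull G X' hx, h x hx⟩
      have h2 : C ⊆ C \ Z := mHull_min h1 hCZconv
      exact (h2 (hQC hq)).2 hqZ
    obtain ⟨xᵢ, hxX', hxZ⟩ := hxex
    obtain ⟨sst, hsstS₀, hadjsst⟩ := hq.2
    obtain ⟨w₁, hw₁⟩ := (show Reach G (U \ C) x₀ sst from hsstS₀)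
    have hw₁S₀ : ∀ x ∈ w₁.support, x ∈ S₀ := fun x hx => reach_of_support hw₁ hx
    set w₂ : G.Walk x₀ q := w₁.append (Walk.cons hadjsst Walk.nil) with hw₂def
    have hw₂sup : ∀ x ∈ w₂.support, x ∈ S₀ ∪ {q} := by
      intro x hx
      rw [hw₂def, Walk.mem_support_append_iff] at hx
      rcases hx with hx | hx
      · exact Or.inl (hw₁S₀ x hx)
      · simp only [Walk.support_cons, Walk.support_nil, List.mem_cons, List.not_mem_nil,
          or_false] at hx
        rcases hx with rfl | rfl
        · exact Or.inl hsstS₀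
        · exact Or.inr rfl
    obtain ⟨p, hpP, hpI, hpS⟩ := exists_induced w₂ hw₂sup
    obtain ⟨w₃, hw₃⟩ := hxZ
    have hw₃Z : ∀ x ∈ w₃.support, x ∈ Z := fun x hx => reach_of_support hw₃ hx
    obtain ⟨r, hrP, hrI, hrS⟩ := exists_induced w₃ hw₃Z
    have hdisj : ∀ x ∈ p.support, x ∈ r.support → x = q := by
      intro x hx hxr
      rcases hpS x hx with hxS | hxq
      · exact absurd (hZsub x (hrS x hxr)).1 ((hS₀sub x hxS).2)
      · exact hxq
    have hcross : ∀ x ∈ p.support, ∀ y ∈ r.support, x ≠ q → y ≠ q → ¬ G.Adj x y := by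
      intro x hx y hy hxq hyq hadj
      have hxS : x ∈ S₀ := by
        rcases hpS x hx with h | h
        · exact h
        · exact absurd h hxq
      have hyZ := hrS y hy
      have hyQ : y ∈ Q := ⟨(hZsub y hyZ).1, x, hxS, hadj⟩
      exact (hZsub y hyZ).2 ⟨hyQ, hyq⟩
    obtain ⟨hP, hI⟩ := append_induced p r hpP hrP hpI hrI hdisj hcross
    have hqmem : q ∈ (p.append r).support :=
      (Walk.mem_support_append_iff _ _).2 (Or.inl (Walk.end_mem_support p))
    have hqint : q ∈ mInterval G x₀ xᵢ := ⟨p.append r, hP, hI, hqmem⟩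
    exact ⟨xᵢ, hxX', (mconvex_mHull G {x₀, xᵢ}) x₀ (subset_mHull _ _ (Or.inl rfl)) xᵢ
      (subset_mHull _ _ (Or.inr rfl)) hqint⟩
  refine ⟨Q, hQC, hQclique, hUCW, hWU, ?_, hKey⟩
  intro c hcC hcQ hcW
  rcases hWSQ hcW with h | h
  · exact (hS₀sub c h).2 hcC
  · exact hcQ h

/-! ### the Caratheodory induction -/

lemma key [Fintype V] (G : SimpleGraph V) : ∀ (n m : ℕ) (X : Set V) (v : V),
    (mHull G X).ncard ≤ n → X.ncard ≤ m → v ∈ mHull G X →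
    ∃ x ∈ X, ∃ y ∈ X, v ∈ mHull G {x, y} := by
  intro n
  induction n using Nat.strong_induction_on with
  | _ n IHn =>
  intro m
  induction m using Nat.strong_induction_on with
  | _ m IHm =>
  intro X v hn hm hv
  by_cases hvX : v ∈ X
  · exact ⟨v, hvX, v, hvX, subset_mHull G {v, v} (Or.inl rfl)⟩
  by_cases hclq : Paper.IsClique G X
  · exact absurd (mHull_min subset_rfl (clique_mconvex hclq) hv) hvX
  have hexab : ∃ a ∈ X, ∃ b ∈ X, a ≠ b ∧ ¬ G.Adj a b := by
    unfold Paper.IsClique at hclq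
    push_neg at hclq
    obtain ⟨a, ha, b, hb, h1, h2⟩ := hclq
    exact ⟨a, ha, b, hb, h1, h2⟩
  obtain ⟨a, haX, b, hbX, hneab, hnadj⟩ := hexab
  by_cases hx₀e : ∃ x₀ ∈ X, x₀ ≠ a ∧ x₀ ≠ b
  swap
  · have hsub : X ⊆ {a, b} := by
      intro x hx
      by_contra hxab
      exact hx₀e ⟨x, hx, fun h => hxab (Or.inl h), fun h => hxab (Or.inr h)⟩
    exact ⟨a, haX, b, hbX, mHull_mono hsub hv⟩
  obtain ⟨x₀, hx₀X, hx₀a, hx₀b⟩ := hx₀e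
  by_cases heq : mHull G (X \ {x₀}) = mHull G X
  · have hlt : (X \ {x₀}).ncard < m :=
      lt_of_lt_of_le (Set.ncard_diff_singleton_lt_of_mem hx₀X) hm
    obtain ⟨x, hx, y, hy, h⟩ := IHm _ hlt (X \ {x₀}) v (by rw [heq]; exact hn) le_rfl
      (by rw [heq]; exact hv)
    exact ⟨x, hx.1, y, hy.1, h⟩
  have hCU : mHull G (X \ {x₀}) ⊆ mHull G X := mHull_mono Set.diff_subset
  have hx₀C : x₀ ∉ mHull G (X \ {x₀}) := by
    intro hmem
    apply heq
    apply Set.Subset.antisymm hCU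
    apply mHull_min _ (mconvex_mHull G (X \ {x₀}))
    intro x hx
    by_cases hxx : x = x₀
    · rwa [hxx]
    · exact subset_mHull _ _ ⟨hx, hxx⟩
  by_cases hvC : v ∈ mHull G (X \ {x₀})
  · have hss : mHull G (X \ {x₀}) ⊂ mHull G X := hCU.ssubset_of_ne heq
    have hlt : (mHull G (X \ {x₀})).ncard < n :=
      lt_of_lt_of_le (Set.ncard_lt_ncard hss) hn
    obtain ⟨x, hx, y, hy, h⟩ := IHn _ hlt (X \ {x₀}).ncard (X \ {x₀}) v le_rfl le_rfl hvC
    exact ⟨x, hx.1, y, hy.1, h⟩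
  obtain ⟨Q, hQC, hQclique, hUCW, hWU, hCnotW, hKey⟩ := main_step G X x₀ hx₀X hx₀C
  have haC : a ∈ mHull G (X \ {x₀}) := subset_mHull _ _ ⟨haX, fun h => hx₀a h.symm⟩
  have hbC : b ∈ mHull G (X \ {x₀}) := subset_mHull _ _ ⟨hbX, fun h => hx₀b h.symm⟩
  have hcstar : ∃ cs ∈ mHull G (X \ {x₀}), cs ∉ Q := by
    by_contra h
    push_neg at h
    exact hnadj (hQclique a (h a haC) b (h b hbC) hneab)
  obtain ⟨cs, hcsC, hcsQ⟩ := hcstar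
  have hWss : mHull G ({x₀} ∪ Q) ⊂ mHull G X := by
    refine ⟨hWU, fun hUW => ?_⟩
    exact (hCnotW cs hcsC hcsQ) (hUW (hCU hcsC))
  have hWlt : (mHull G ({x₀} ∪ Q)).ncard < n :=
    lt_of_lt_of_le (Set.ncard_lt_ncard hWss) hn
  have hvW : v ∈ mHull G ({x₀} ∪ Q) := by
    rcases hUCW hv with h | h
    · exact absurd h hvC
    · exact h
  obtain ⟨α, hα, β, hβ, hv2⟩ := IHn _ hWlt ({x₀} ∪ Q).ncard ({x₀} ∪ Q) v le_rfl le_rfl hvW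
  have finish : ∀ q ∈ Q, v ∈ mHull G {x₀, q} → ∃ x ∈ X, ∃ y ∈ X, v ∈ mHull G {x, y} := by
    intro q hq hvq
    obtain ⟨xᵢ, hxᵢ, hqmem⟩ := hKey q hq
    have hsub : ({x₀, q} : Set V) ⊆ mHull G {x₀, xᵢ} := by
      intro z hz
      rcases hz with rfl | hz
      · exact subset_mHull _ _ (Or.inl rfl)
      · rw [Set.mem_singleton_iff] at hz
        rw [hz]
        exact hqmem
    exact ⟨x₀, hx₀X, xᵢ, hxᵢ.1, (mHull_min hsub (mconvex_mHull _ _)) hvq⟩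
  rcases hα with hα | hαQ
  · rcases hβ with hβ | hβQ
    · refine ⟨x₀, hx₀X, x₀, hx₀X, ?_⟩
      rw [show α = x₀ from hα, show β = x₀ from hβ] at hv2
      exact hv2
    · apply finish β hβQ
      rw [show α = x₀ from hα] at hv2
      exact hv2
  · rcases hβ with hβ | hβQ
    · apply finish α hαQ
      rw [show β = x₀ from hβ] at hv2
      rwa [Set.pair_comm] at hv2
    · refine absurd ((mHull_min ?_ (mconvex_mHull G (X \ {x₀}))) hv2) hvC
      intro z hz
      rcases hz with rfl | hz
      · exact hQC hαQ
      · rw [Set.mem_singleton_iff] at hz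
        rw [hz]
        exact hQC hβQ

end CarAux

open CarAux

theorem stmt_7 [Fintype V] (G : SimpleGraph V) (hG : G.Connected)
    (hnc : ¬ ∀ u v : V, u ≠ v → G.Adj u v)
    (X : Set V) (v : V) (hv : v ∈ mHull G X) :
    ∃ Y ⊆ X, Y.ncard ≤ 2 ∧ v ∈ mHull G Y := by
  obtain ⟨x, hx, y, hy, h⟩ :=
    CarAux.key G (mHull G X).ncard X.ncard X v le_rfl le_rfl hv
  refine ⟨{x, y}, ?_, ?_, h⟩
  · intro z hz
    rcases hz with rfl | hz
    · exact hx
    · rw [Set.mem_singleton_iff] at hz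
      rw [hz]
      exact hy
  · calc ({x, y} : Set V).ncard ≤ ({y} : Set V).ncard + 1 := Set.ncard_insert_le x {y}
      _ ≤ 2 := by rw [Set.ncard_singleton]
end

section
/- Let G be a finite connected graph and C ⊆ V(G) a monophonically convex set. Let u, v ∈ V(G) \ C be distinct non-adjacent vertices. Then cl({u,v}) ∩ C ≠ ∅ if and only if there exist u', v' ∈ N(C) with u'v' ∉ E(G) and u', v' ∈ cl({u,v}). -/
open Classical

variable {V : Type*}

open Paper

namespace StmtAux

open SimpleGraph Paper

variable {V : Type*} {G : SimpleGraph V}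

lemma subset_mHull (G : SimpleGraph V) (X : Set V) : X ⊆ mHull G X := by
  intro x hx
  rw [mHull, Set.mem_sInter]
  exact fun D hD => hD.2 hx

lemma mHull_subset {X D : Set V} (hD : MConvex G D) (hXD : X ⊆ D) : mHull G X ⊆ D :=
  Set.sInter_subset_of_mem ⟨hD, hXD⟩

lemma mConvex_mHull (G : SimpleGraph V) (X : Set V) : MConvex G (mHull G X) := by
  intro a ha b hb w hw
  rw [mHull, Set.mem_sInter] at ha hb ⊢
  intro D hD
  exact hD.1 a (ha D hD) b (hb D hD) hw

lemma getVert_inj_of_isPath {a b : V} (p : G.Walk a b) (hp : p.IsPath) :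
    ∀ i j, i ≤ p.length → j ≤ p.length → p.getVert i = p.getVert j → i = j := by
  induction p with
  | nil => intro i j hi hj _; simp only [Walk.length_nil, Nat.le_zero] at hi hj; omega
  | cons h q ih =>
    rw [Walk.cons_isPath_iff] at hp
    intro i j hi hj hij
    rw [Walk.length_cons] at hi hj
    match i, j with
    | 0, 0 => rfl
    | 0, j + 1 =>
      exfalso
      apply hp.2
      rw [Walk.getVert_zero, Walk.getVert_cons_succ] at hij
      exact Walk.mem_support_iff_exists_getVert.mpr ⟨j, hij.symm, by omega⟩
    | i + 1, 0 =>
      exfalso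
      apply hp.2
      rw [Walk.getVert_zero, Walk.getVert_cons_succ] at hij
      exact Walk.mem_support_iff_exists_getVert.mpr ⟨i, hij, by omega⟩
    | i + 1, j + 1 =>
      rw [Walk.getVert_cons_succ, Walk.getVert_cons_succ] at hij
      have := ih hp.1 i j (by omega) (by omega) hij
      omega

lemma two_le_length_aux {x y : V} (t : G.Walk x y) (hxy : x ≠ y)
    (he : s(x, y) ∉ t.edges) : 2 ≤ t.length := by
  match t with
  | .nil => exact absurd rfl hxy
  | .cons h .nil => simp at he
  | .cons _ (.cons _ _) => simp only [Walk.length_cons]; omega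

lemma exists_induced_path (G : SimpleGraph V) :
    ∀ n : ℕ, ∀ {a b : V} (p : G.Walk a b), p.length ≤ n →
      ∃ q : G.Walk a b, q.IsPath ∧ q.toSubgraph.IsInduced ∧
        ∀ x ∈ q.support, x ∈ p.support := by
  intro n
  induction n using Nat.strong_induction_on with
  | _ n ih =>
  intro a b p hlen
  by_cases hind : p.bypass.toSubgraph.IsInduced
  · exact ⟨p.bypass, p.bypass_isPath, hind, fun x hx => p.support_bypass_subset hx⟩
  set p' := p.bypass with hp'def
  have hplen : p'.length ≤ p.length := p.length_bypass_le
  unfold SimpleGraph.Subgraph.IsInduced at hind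
  push_neg at hind
  obtain ⟨x, hxv, y, hyv, hadj, hnadj⟩ := hind
  have hx : x ∈ p'.support := (p'.mem_verts_toSubgraph).mp hxv
  have hy : y ∈ p'.support := (p'.mem_verts_toSubgraph).mp hyv
  have hne : x ≠ y := hadj.ne
  have hedge : ∀ e ∈ p'.edges, p'.toSubgraph.edgeSet = p'.toSubgraph.edgeSet := fun _ _ => rfl
  have hchord : s(x, y) ∉ p'.edges := by
    intro hmem
    exact hnadj (SimpleGraph.Subgraph.mem_edgeSet.mp ((p'.mem_edges_toSubgraph).mpr hmem))
  have hchord' : s(y, x) ∉ p'.edges := by rwa [Sym2.eq_swap]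
  have htspec := congrArg Walk.length (p'.take_spec hx)
  rw [Walk.length_append] at htspec
  by_cases hyd : y ∈ (p'.dropUntil x hx).support
  · -- y occurs after x
    set d := p'.dropUntil x hx with hd
    have hdspec := congrArg Walk.length (d.take_spec hyd)
    rw [Walk.length_append] at hdspec
    have h2 : 2 ≤ (d.takeUntil y hyd).length := by
      refine two_le_length_aux _ hne fun hmem => hchord ?_
      exact p'.edges_dropUntil_subset hx (d.edges_takeUntil_subset hyd hmem)
    set w : G.Walk a b := (p'.takeUntil x hx).append (Walk.cons hadj (d.dropUntil y hyd))
      with hwdef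
    have hwlen : w.length < n := by
      rw [hwdef, Walk.length_append, Walk.length_cons]
      omega
    obtain ⟨q, hq1, hq2, hq3⟩ := ih w.length hwlen w le_rfl
    refine ⟨q, hq1, hq2, fun z hz => p.support_bypass_subset ?_⟩
    have := hq3 z hz
    rw [hwdef, Walk.mem_support_append_iff] at this
    rcases this with h | h
    · exact p'.support_takeUntil_subset hx h
    · rw [Walk.support_cons, List.mem_cons] at h
      rcases h with rfl | h
      · exact hx
      · exact p'.support_dropUntil_subset hx (d.support_dropUntil_subset hyd h)
  · -- y occurs before x
    have hyt : y ∈ (p'.takeUntil x hx).support := by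
      have := hy
      rw [← p'.take_spec hx, Walk.mem_support_append_iff] at this
      exact this.resolve_right hyd
    set t := p'.takeUntil x hx with ht
    have htspec2 := congrArg Walk.length (t.take_spec hyt)
    rw [Walk.length_append] at htspec2
    have h2 : 2 ≤ (t.dropUntil y hyt).length := by
      refine two_le_length_aux _ hne.symm fun hmem => hchord' ?_
      exact p'.edges_takeUntil_subset hx (t.edges_dropUntil_subset hyt hmem)
    set w : G.Walk a b := (t.takeUntil y hyt).append
      (Walk.cons hadj.symm (p'.dropUntil x hx)) with hwdef
    have hwlen : w.length < n := by
      rw [hwdef, Walk.length_append, Walk.length_cons]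
      omega
    obtain ⟨q, hq1, hq2, hq3⟩ := ih w.length hwlen w le_rfl
    refine ⟨q, hq1, hq2, fun z hz => p.support_bypass_subset ?_⟩
    have := hq3 z hz
    rw [hwdef, Walk.mem_support_append_iff] at this
    rcases this with h | h
    · exact p'.support_takeUntil_subset hx (t.support_takeUntil_subset hyt h)
    · rw [Walk.support_cons, List.mem_cons] at h
      rcases h with rfl | h
      · exact hy
      · exact p'.support_dropUntil_subset hx h

lemma key_lemma {C : Set V} {a b : V} (p : G.Walk a b) (hp : p.IsPath)
    (hind : p.toSubgraph.IsInduced) (ha : a ∉ C) (hb : b ∉ C)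
    {k : ℕ} (hk : k ≤ p.length) (hkC : p.getVert k ∈ C) :
    ∃ u' ∈ p.support, ∃ v' ∈ p.support, u' ∈ nbhd G C ∧ v' ∈ nbhd G C ∧
      u' ≠ v' ∧ ¬ G.Adj u' v' := by
  classical
  have hex : ∃ i, p.getVert i ∈ C := ⟨k, hkC⟩
  set i₀ := Nat.find hex with hi₀def
  have hPi : p.getVert i₀ ∈ C := Nat.find_spec hex
  have hi₀k : i₀ ≤ k := Nat.find_min' hex hkC
  have hi₀len : i₀ ≤ p.length := le_trans hi₀k hk
  have hi₀pos : i₀ ≠ 0 := by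
    intro h
    rw [h, p.getVert_zero] at hPi
    exact ha hPi
  set j₀ := Nat.findGreatest (fun i => p.getVert i ∈ C) p.length with hj₀def
  have hPj : p.getVert j₀ ∈ C := Nat.findGreatest_spec (P := fun i => p.getVert i ∈ C) hi₀len hPi
  have hj₀le : j₀ ≤ p.length := Nat.findGreatest_le _
  have hij : i₀ ≤ j₀ := Nat.le_findGreatest (P := fun i => p.getVert i ∈ C) hi₀len hPi
  have hj₀ne : j₀ ≠ p.length := by
    intro h
    rw [h, p.getVert_length] at hPj
    exact hb hPj
  have hprev : p.getVert (i₀ - 1) ∉ C := Nat.find_min hex (by omega)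
  have hnext : p.getVert (j₀ + 1) ∉ C :=
    Nat.findGreatest_is_greatest (P := fun i => p.getVert i ∈ C) (n := p.length) (by omega) (by omega)
  have hinj := getVert_inj_of_isPath p hp
  refine ⟨p.getVert (i₀ - 1), ?_, p.getVert (j₀ + 1), ?_, ?_, ?_, ?_, ?_⟩
  · exact Walk.mem_support_iff_exists_getVert.mpr ⟨i₀ - 1, rfl, by omega⟩
  · exact Walk.mem_support_iff_exists_getVert.mpr ⟨j₀ + 1, rfl, by omega⟩
  · refine ⟨hprev, p.getVert i₀, hPi, ?_⟩
    have := p.adj_getVert_succ (i := i₀ - 1) (by omega)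
    have heq : i₀ - 1 + 1 = i₀ := by omega
    rw [heq] at this
    exact this.symm
  · exact ⟨hnext, p.getVert j₀, hPj, p.adj_getVert_succ (by omega)⟩
  · intro h
    have := hinj (i₀ - 1) (j₀ + 1) (by omega) (by omega) h
    omega
  · intro hA
    have hmem1 : p.getVert (i₀ - 1) ∈ p.toSubgraph.verts :=
      (p.mem_verts_toSubgraph).mpr
        (Walk.mem_support_iff_exists_getVert.mpr ⟨i₀ - 1, rfl, by omega⟩)
    have hmem2 : p.getVert (j₀ + 1) ∈ p.toSubgraph.verts :=
      (p.mem_verts_toSubgraph).mpr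
        (Walk.mem_support_iff_exists_getVert.mpr ⟨j₀ + 1, rfl, by omega⟩)
    have hadj := hind hmem1 hmem2 hA
    rw [Walk.toSubgraph_adj_iff] at hadj
    obtain ⟨i, hsym, hilen⟩ := hadj
    rw [Sym2.eq_iff] at hsym
    rcases hsym with ⟨h1, h2⟩ | ⟨h1, h2⟩
    · have e1 := hinj i (i₀ - 1) (by omega) (by omega) h1
      have e2 := hinj (i + 1) (j₀ + 1) (by omega) (by omega) h2
      omega
    · have e1 := hinj i (j₀ + 1) (by omega) (by omega) h1
      have e2 := hinj (i + 1) (i₀ - 1) (by omega) (by omega) h2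
      omega

end StmtAux

theorem stmt_8 [Fintype V] (G : SimpleGraph V) (hG : G.Connected)
    (C : Set V) (hC : MConvex G C) (u v : V) (hu : u ∉ C) (hv : v ∉ C)
    (huv : u ≠ v) (hnadj : ¬ G.Adj u v) :
    (mHull G {u, v} ∩ C).Nonempty ↔
      ∃ u' ∈ nbhd G C, ∃ v' ∈ nbhd G C, u' ≠ v' ∧ ¬ G.Adj u' v' ∧
        u' ∈ mHull G {u, v} ∧ v' ∈ mHull G {u, v} := by
  classical
  have hhull := StmtAux.mConvex_mHull G ({u, v} : Set V)
  have huH : u ∈ mHull G {u, v} := StmtAux.subset_mHull G _ (by simp)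
  have hvH : v ∈ mHull G {u, v} := StmtAux.subset_mHull G _ (by simp)
  constructor
  · rintro ⟨c, hcH, hcC⟩
    set S : Set V := mHull G {u, v} \ C with hSdef
    have hSsub : ({u, v} : Set V) ⊆ S := by
      rintro x (rfl | rfl)
      · exact ⟨huH, hu⟩
      · exact ⟨hvH, hv⟩
    have hSnc : ¬ MConvex G S := by
      intro hconv
      exact (StmtAux.mHull_subset hconv hSsub hcH).2 hcC
    rw [MConvex] at hSnc
    push_neg at hSnc
    obtain ⟨a, haS, b, hbS, hnsub⟩ := hSnc
    rw [Set.not_subset] at hnsub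
    obtain ⟨w, hwI, hwS⟩ := hnsub
    obtain ⟨p, hpath, hpind, hwsup⟩ := hwI
    have hsupH : ∀ x ∈ p.support, x ∈ mHull G {u, v} := fun x hx =>
      hhull a haS.1 b hbS.1 ⟨p, hpath, hpind, hx⟩
    have hwC : w ∈ C := by
      by_contra hwC
      exact hwS ⟨hsupH w hwsup, hwC⟩
    obtain ⟨k, hkeq, hklen⟩ := SimpleGraph.Walk.mem_support_iff_exists_getVert.mp hwsup
    have hkC : p.getVert k ∈ C := by rwa [hkeq]
    obtain ⟨u', hu'sup, v', hv'sup, hu'N, hv'N, hne, hnadj'⟩ :=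
      StmtAux.key_lemma p hpath hpind haS.2 hbS.2 hklen hkC
    exact ⟨u', hu'N, v', hv'N, hne, hnadj', hsupH u' hu'sup, hsupH v' hv'sup⟩
  · rintro ⟨u', hu'N, v', hv'N, hne, hnadj', hu'H, hv'H⟩
    obtain ⟨hu'C, c, hcC, hcadj⟩ := hu'N
    obtain ⟨hv'C, c', hc'C, hc'adj⟩ := hv'N
    obtain ⟨W0⟩ := hG.preconnected c c'
    obtain ⟨q, hqpath, hqind, hqsup⟩ := StmtAux.exists_induced_path G W0.length W0 le_rfl
    have hqC : ∀ x ∈ q.support, x ∈ C := fun x hx =>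
      hC c hcC c' hc'C ⟨q, hqpath, hqind, hx⟩
    set W : G.Walk u' v' :=
      SimpleGraph.Walk.cons hcadj.symm
        (q.append (SimpleGraph.Walk.cons hc'adj SimpleGraph.Walk.nil)) with hWdef
    obtain ⟨r, hrpath, hrind, hrsup⟩ := StmtAux.exists_induced_path G W.length W le_rfl
    have hr0 : r.length ≠ 0 := fun h => hne (SimpleGraph.Walk.eq_of_length_eq_zero h)
    have hr1 : r.length ≠ 1 := by
      intro h
      apply hnadj'
      have := r.adj_getVert_succ (i := 0) (by omega)
      rw [r.getVert_zero, zero_add] at this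
      have h1 : r.getVert 1 = v' := by
        conv_lhs => rw [← h]
        exact r.getVert_length
      rwa [h1] at this
    have hmsup : r.getVert 1 ∈ r.support :=
      SimpleGraph.Walk.mem_support_iff_exists_getVert.mpr ⟨1, rfl, by omega⟩
    have hinj := StmtAux.getVert_inj_of_isPath r hrpath
    have hmu : r.getVert 1 ≠ u' := by
      intro h
      have : r.getVert 1 = r.getVert 0 := by rw [r.getVert_zero, h]
      have := hinj 1 0 (by omega) (by omega) this
      omega
    have hmv : r.getVert 1 ≠ v' := by
      intro h
      have : r.getVert 1 = r.getVert r.length := by rw [r.getVert_length, h]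
      have := hinj 1 r.length (by omega) le_rfl this
      omega
    have hmC : r.getVert 1 ∈ C := by
      have := hrsup _ hmsup
      rw [hWdef, SimpleGraph.Walk.support_cons, List.mem_cons] at this
      rcases this with h | h
      · exact absurd h hmu
      · rw [SimpleGraph.Walk.mem_support_append_iff] at h
        rcases h with h | h
        · exact hqC _ h
        · rw [SimpleGraph.Walk.support_cons, List.mem_cons] at h
          rcases h with h | h
          · rw [h]; exact hc'C
          · rw [SimpleGraph.Walk.support_nil, List.mem_singleton] at h
            exact absurd h hmv
    have hmH : r.getVert 1 ∈ mHull G {u, v} :=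
      hhull u' hu'H v' hv'H ⟨r, hrpath, hrind, hmsup⟩
    exact ⟨r.getVert 1, hmH, hmC⟩
end

section
/- Let G be a finite connected graph, C ⊆ V(G) a monophonically convex set, and u, v ∈ V(G) \ C distinct adjacent vertices. If F(C, {u}) \ F(C, {v}) ≠ ∅, then u ∈ cl(C ∪ {v}). -/
open Classical

variable {V : Type*}

open Paper

theorem stmt_9 [Fintype V] (G : SimpleGraph V) (hG : G.Connected)
    (C : Set V) (hC : MConvex G C) (u v : V) (hu : u ∉ C) (hv : v ∉ C)
    (huv : u ≠ v) (hadj : G.Adj u v)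
    (hF : (front G C {u} \ front G C {v}).Nonempty) :
    u ∈ mHull G (C ∪ {v}) := by
  obtain ⟨w, hwF, hwN⟩ := hF
  obtain ⟨hwC, hwcn⟩ := hwF
  -- extract adjacency u w
  have hwu : w ≠ u := fun h => hu (h ▸ hwC)
  have hadjuw : G.Adj u w := by
    rcases hwcn with h | h
    · exact absurd h.symm hwu.symm
    · obtain ⟨_, x, hx, hxa⟩ := h
      rcases hx with rfl
      exact hxa
  have hwv : w ≠ v := fun h => hv (h ▸ hwC)
  have hnadjvw : ¬ G.Adj v w := by
    intro h
    exact hwN ⟨hwC, Or.inr ⟨fun hw => hwv (Set.mem_singleton_iff.mp hw), v, rfl, h⟩⟩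
  -- build the path v - u - w
  intro D hD
  obtain ⟨hDconv, hDsub⟩ := hD
  have hvD : v ∈ D := hDsub (Or.inr rfl)
  have hwD : w ∈ D := hDsub (Or.inl hwC)
  apply hDconv v hvD w hwD
  refine ⟨SimpleGraph.Walk.cons hadj.symm (SimpleGraph.Walk.cons hadjuw SimpleGraph.Walk.nil), ?_, ?_, ?_⟩
  · simp [SimpleGraph.Walk.isPath_def, huv.symm, hwu.symm, hwv.symm]
  · intro a ha b hb hab
    simp only [SimpleGraph.Walk.toSubgraph, SimpleGraph.Subgraph.verts_sup,
      SimpleGraph.subgraphOfAdj_verts, Set.mem_union, Set.mem_insert_iff,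
      SimpleGraph.singletonSubgraph_verts, Set.mem_singleton_iff] at ha hb
    simp only [SimpleGraph.Walk.toSubgraph, SimpleGraph.Subgraph.sup_adj,
      SimpleGraph.subgraphOfAdj_adj, SimpleGraph.singletonSubgraph_adj, Pi.bot_apply]
    rcases ha with (rfl | rfl) | (rfl | rfl) | rfl <;> rcases hb with (rfl | rfl) | (rfl | rfl) | rfl <;>
      first
        | exact absurd hab (G.irrefl)
        | exact absurd hab hnadjvw
        | exact absurd hab.symm hnadjvw
        | simp [Sym2.eq_swap]
  · simp
end

section
/- Let G be a finite connected graph, and A, B linked, disjoint, saturated subsets of V(G). Then MFS(A, B) = { {u, v} ⊆ V(G) \ (A ∪ B) : cl({u,v}) ∩ N(A ∪ B) is not a clique }. In particular, every minimal forbidden set has size 2. -/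
open Classical

variable {V : Type*}

open Paper


namespace PaperProof
open Paper SimpleGraph Walk
variable {G : SimpleGraph V}


open Paper SimpleGraph Walk

variable {G : SimpleGraph V}

/-- chord-free condition for a walk -/
def CF (G : SimpleGraph V) {u v : V} (p : G.Walk u v) : Prop :=
  ∀ ⦃x y : V⦄, x ∈ p.support → y ∈ p.support → G.Adj x y → s(x, y) ∈ p.edges

lemma toSubgraph_adj_of_mem_edges {u v x y : V} (p : G.Walk u v)
    (h : s(x, y) ∈ p.edges) : p.toSubgraph.Adj x y := by
  induction p with
  | nil => simp at h
  | cons hadj q ih =>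
    simp only [Walk.edges_cons, List.mem_cons] at h
    rcases h with h | h
    · simp only [Walk.toSubgraph, Subgraph.sup_adj]
      left
      rw [Sym2.eq_iff] at h
      rcases h with ⟨rfl, rfl⟩ | ⟨rfl, rfl⟩
      · simp
      · simp [SimpleGraph.subgraphOfAdj, Sym2.eq_swap]
    · exact Subgraph.sup_adj.mpr (Or.inr (ih h))

lemma mem_edges_of_toSubgraph_adj {u v x y : V} (p : G.Walk u v)
    (h : p.toSubgraph.Adj x y) : s(x, y) ∈ p.edges := by
  induction p with
  | nil => simp [Walk.toSubgraph, SimpleGraph.singletonSubgraph_adj] at h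
  | cons hadj q ih =>
    simp only [Walk.toSubgraph, Subgraph.sup_adj] at h
    rcases h with h | h
    · simp only [SimpleGraph.subgraphOfAdj_adj] at h
      simp [Walk.edges_cons, h.symm]
    · simp [Walk.edges_cons, ih h]

lemma isInduced_iff_cf {u v : V} (p : G.Walk u v) :
    p.toSubgraph.IsInduced ↔ CF G p := by
  constructor
  · intro h x y hx hy hadj
    exact mem_edges_of_toSubgraph_adj p
      (h ((p.mem_verts_toSubgraph).2 hx) ((p.mem_verts_toSubgraph).2 hy) hadj)
  · intro h x hx y hy hadj
    exact toSubgraph_adj_of_mem_edges p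
      (h ((p.mem_verts_toSubgraph).1 hx) ((p.mem_verts_toSubgraph).1 hy) hadj)

lemma mem_mInterval_iff {u v w : V} :
    w ∈ mInterval G u v ↔ ∃ p : G.Walk u v, p.IsPath ∧ CF G p ∧ w ∈ p.support := by
  unfold mInterval
  constructor
  · rintro ⟨p, h1, h2, h3⟩; exact ⟨p, h1, (isInduced_iff_cf p).1 h2, h3⟩
  · rintro ⟨p, h1, h2, h3⟩; exact ⟨p, h1, (isInduced_iff_cf p).2 h2, h3⟩

lemma edges_length_one {x y : V} (r : G.Walk x y) (h : r.length = 1) :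
    r.edges = [s(x, y)] := by
  cases r with
  | nil => simp at h
  | cons hadj q =>
    have hq : q.length = 0 := by simpa using h
    have := q.eq_of_length_eq_zero hq
    subst this
    have : q = Walk.nil := Walk.nil_iff_eq_nil.mp (Walk.length_eq_zero_iff.mp hq)
    subst this
    simp

/-- minimal-length walk within S is an induced path -/
lemma geo {u v : V} (S : Set V) (hw : ∃ w : G.Walk u v, ∀ z ∈ w.support, z ∈ S) :
    ∃ p : G.Walk u v, p.IsPath ∧ CF G p ∧ (∀ z ∈ p.support, z ∈ S) ∧
      ∀ (w' : G.Walk u v), (∀ z ∈ w'.support, z ∈ S) → p.length ≤ w'.length := by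
  classical
  obtain ⟨w0, hw0⟩ := hw
  have hex : ∃ n, ∃ w : G.Walk u v, (∀ z ∈ w.support, z ∈ S) ∧ w.length = n :=
    ⟨w0.length, w0, hw0, rfl⟩
  obtain ⟨p, hpS, hplen⟩ := Nat.find_spec hex
  have hmin : ∀ (w' : G.Walk u v), (∀ z ∈ w'.support, z ∈ S) →
      Nat.find hex ≤ w'.length := by
    intro w' hw'
    by_contra hlt
    push_neg at hlt
    exact Nat.find_min hex hlt ⟨w', hw', rfl⟩
  rw [← hplen] at hmin
  have hminp : ∀ (w' : G.Walk u v), (∀ z ∈ w'.support, z ∈ S) →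
      p.length ≤ w'.length := hmin
  -- p is a path
  have hpath : p.IsPath := by
    by_cases hb : p.bypass.length < p.length
    · exact absurd (hminp p.bypass (fun z hz => hpS z (p.support_bypass_subset hz))) (by omega)
    · push_neg at hb
      have := p.bypass_eq_self_of_length_le hb
      rw [← this]
      exact p.bypass_isPath
  refine ⟨p, hpath, ?_, hpS, hminp⟩
  -- chord-free
  intro x y hx hy hadj
  by_contra hne
  have hyend : y ∈ p.support := hy
  set q := p.takeUntil y hy with hq
  set r := p.dropUntil y hy with hr
  have hspec : q.append r = p := p.take_spec hy
  by_cases hxq : x ∈ q.support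
  · set q1 := q.takeUntil x hxq with hq1
    set q2 := q.dropUntil x hxq with hq2
    have hq2edges : q2.edges ⊆ p.edges := fun e he =>
      (p.edges_takeUntil_subset hy) (q.edges_dropUntil_subset hxq he)
    have hq2len : 2 ≤ q2.length := by
      rcases Nat.lt_or_ge q2.length 2 with hl | hl
      · interval_cases h : q2.length
        · exact absurd (q2.eq_of_length_eq_zero h) hadj.ne
        · exact absurd (hq2edges (by rw [edges_length_one q2 h]; simp)) hne
      · exact hl
    have hqlen : q.length = q1.length + q2.length := by
      conv_lhs => rw [← q.take_spec hxq]
      rw [Walk.length_append]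
    have hplen2 : p.length = q.length + r.length := by
      conv_lhs => rw [← hspec]; rw [Walk.length_append]
    set w' := (q1.concat hadj).append r with hw'
    have hw'S : ∀ z ∈ w'.support, z ∈ S := by
      intro z hz
      rw [hw', Walk.mem_support_append_iff] at hz
      rcases hz with hz | hz
      · rw [Walk.concat_eq_append, Walk.mem_support_append_iff] at hz
        rcases hz with hz | hz
        · exact hpS z ((p.support_takeUntil_subset hy) ((q.support_takeUntil_subset hxq) hz))
        · simp only [Walk.support_cons, Walk.support_nil, List.mem_cons,
            List.not_mem_nil, or_false, List.mem_singleton] at hz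
          rcases hz with rfl | rfl
          · exact hpS z ((p.support_takeUntil_subset hy)
              ((q.support_takeUntil_subset hxq) q1.end_mem_support))
          · exact hpS _ hyend
      · exact hpS z ((p.support_dropUntil_subset hy) hz)
    have : w'.length < p.length := by
      rw [hw', Walk.length_append, Walk.length_concat, hplen2, hqlen]
      omega
    exact absurd (hminp w' hw'S) (by omega)
  · have hxr : x ∈ r.support := by
      have := hx
      rw [← hspec, Walk.mem_support_append_iff] at this
      tauto
    set r1 := r.takeUntil x hxr with hr1
    set r2 := r.dropUntil x hxr with hr2
    have hr1edges : r1.edges ⊆ p.edges := fun e he =>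
      (p.edges_dropUntil_subset hy) (r.edges_takeUntil_subset hxr he)
    have hr1len : 2 ≤ r1.length := by
      rcases Nat.lt_or_ge r1.length 2 with hl | hl
      · interval_cases h : r1.length
        · exact absurd (r1.eq_of_length_eq_zero h).symm hadj.ne
        · refine absurd (hr1edges (by rw [edges_length_one r1 h]; rw [Sym2.eq_swap]; simp)) hne
      · exact hl
    have hrlen : r.length = r1.length + r2.length := by
      conv_lhs => rw [← r.take_spec hxr]
      rw [Walk.length_append]
    have hplen2 : p.length = q.length + r.length := by
      conv_lhs => rw [← hspec]; rw [Walk.length_append]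
    set w' := q.append (Walk.cons hadj.symm r2) with hw'
    have hw'S : ∀ z ∈ w'.support, z ∈ S := by
      intro z hz
      rw [hw', Walk.mem_support_append_iff] at hz
      rcases hz with hz | hz
      · exact hpS z ((p.support_takeUntil_subset hy) hz)
      · simp only [Walk.support_cons, List.mem_cons] at hz
        rcases hz with rfl | hz
        · exact hpS z hyend
        · exact hpS z ((p.support_dropUntil_subset hy) ((r.support_dropUntil_subset hxr) hz))
    have : w'.length < p.length := by
      rw [hw', Walk.length_append, Walk.length_cons, hplen2, hrlen]
      omega
    exact absurd (hminp w' hw'S) (by omega)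






/-- decomposition at first entry into T -/
lemma ftbuild {T : Set V} :
    ∀ {u v : V} (p : G.Walk u v), u ∉ T → (∃ t ∈ p.support, t ∈ T) →
    ∃ (k w : V) (hkw : G.Adj k w) (q : G.Walk u k) (r : G.Walk w v),
      p = q.append (Walk.cons hkw r) ∧ (∀ z ∈ q.support, z ∉ T) ∧ k ∉ T ∧ w ∈ T := by
  intro u v p
  induction p with
  | nil =>
    intro hu ht
    obtain ⟨t, htsup, htT⟩ := ht
    simp only [Walk.support_nil, List.mem_singleton] at htsup
    exact absurd (htsup ▸ htT) hu
  | @cons a b c hadj p' ih =>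
    intro hu ht
    by_cases hb : b ∈ T
    · exact ⟨a, b, hadj, Walk.nil, p', by simp, by simp [hu], hu, hb⟩
    · have ht' : ∃ t ∈ p'.support, t ∈ T := by
        obtain ⟨t, htsup, htT⟩ := ht
        simp only [Walk.support_cons, List.mem_cons] at htsup
        rcases htsup with rfl | h
        · exact absurd htT hu
        · exact ⟨t, h, htT⟩
      obtain ⟨k, w, hkw, q, r, heq, hq, hk, hw⟩ := ih hb ht'
      refine ⟨k, w, hkw, Walk.cons hadj q, r, by rw [Walk.cons_append, heq], ?_, hk, hw⟩
      intro z hz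
      simp only [Walk.support_cons, List.mem_cons] at hz
      rcases hz with rfl | hz
      · exact hu
      · exact hq z hz

/-- the sandwich lemma: an induced path between two points outside T that meets T
    yields two distinct nonadjacent vertices just outside T, adjacent to T. -/
lemma sandwich {T : Set V} {u v : V} (p : G.Walk u v) (hp : p.IsPath) (hcf : CF G p)
    (hu : u ∉ T) (hv : v ∉ T) (ht : ∃ t ∈ p.support, t ∈ T) :
    ∃ k₁ k₂ w₁ w₂, k₁ ∈ p.support ∧ k₂ ∈ p.support ∧ k₁ ∉ T ∧ k₂ ∉ T ∧
      w₁ ∈ T ∧ w₂ ∈ T ∧ G.Adj k₁ w₁ ∧ G.Adj k₂ w₂ ∧ k₁ ≠ k₂ ∧ ¬ G.Adj k₁ k₂ := by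
  obtain ⟨k₁, w₁, hkw, q, r, heq, hqT, hk₁, hw₁⟩ := ftbuild p hu ht
  -- now work on z := cons hkw r, from the reverse side
  set z : G.Walk k₁ v := Walk.cons hkw r with hz
  have hzrevT : ∃ t ∈ z.reverse.support, t ∈ T := by
    refine ⟨w₁, ?_, hw₁⟩
    rw [Walk.support_reverse, List.mem_reverse]
    simp [hz]
  obtain ⟨k₂, w₂, hkw₂, q₂, r₂, heq₂, hq₂T, hk₂, hw₂⟩ := ftbuild z.reverse hv hzrevT
  -- basic support facts
  have hzpath : z.IsPath := by
    have : p.IsPath := hp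
    rw [heq] at this
    exact this.of_append_right
  have hqpath : q.IsPath := by
    have : p.IsPath := hp
    rw [heq] at this
    exact this.of_append_left
  have hzrevpath : z.reverse.IsPath := hzpath.reverse
  -- k₂ ∈ r.support  (k₂ ∈ z.support, k₂ ≠ k₁)
  have hk₂zrev : k₂ ∈ z.reverse.support := by
    rw [heq₂, Walk.mem_support_append_iff]
    left; exact q₂.end_mem_support
  have hk₂z : k₂ ∈ z.support := by rwa [Walk.support_reverse, List.mem_reverse] at hk₂zrev
  -- z.reverse = q₂.append (cons hkw₂ r₂), so its support = q₂.support ++ (r₂.support)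
  have hzrevsup : z.reverse.support = q₂.support ++ r₂.support := by
    rw [heq₂, Walk.support_append]
    simp
  have hzrevnodup : z.reverse.support.Nodup := hzrevpath.support_nodup
  have hdisj₂ : ∀ x, x ∈ q₂.support → x ∈ r₂.support → False := by
    intro x hx1 hx2
    rw [hzrevsup] at hzrevnodup
    exact (List.disjoint_of_nodup_append hzrevnodup) hx1 hx2
  have hk₁r₂ : k₁ ∈ r₂.support := r₂.end_mem_support
  have hk₁k₂ : k₁ ≠ k₂ := by
    intro h
    exact hdisj₂ k₂ q₂.end_mem_support (h ▸ hk₁r₂)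
  -- supports in p
  have hpsup : p.support = q.support ++ r.support := by
    rw [heq, Walk.support_append]
    simp [hz]
  have hpnodup : p.support.Nodup := hp.support_nodup
  have hdisj : ∀ x, x ∈ q.support → x ∈ r.support → False := by
    intro x hx1 hx2
    rw [hpsup] at hpnodup
    exact (List.disjoint_of_nodup_append hpnodup) hx1 hx2
  have hk₁p : k₁ ∈ p.support := by
    rw [hpsup, List.mem_append]; left; exact q.end_mem_support
  have hk₂r : k₂ ∈ r.support := by
    have := hk₂z
    rw [hz, Walk.support_cons, List.mem_cons] at this
    rcases this with h | h
    · exact (hk₁k₂ h.symm).elim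
    · exact h
  have hk₂p : k₂ ∈ p.support := by
    rw [hpsup, List.mem_append]; right; exact hk₂r
  refine ⟨k₁, k₂, w₁, w₂, hk₁p, hk₂p, hk₁, hk₂, hw₁, hw₂, hkw, hkw₂, hk₁k₂, ?_⟩
  -- non-adjacency
  intro hadj
  have hedge : s(k₁, k₂) ∈ p.edges := hcf hk₁p hk₂p hadj
  have hpedges : p.edges = q.edges ++ (s(k₁, w₁) :: r.edges) := by
    rw [heq, Walk.edges_append]
    simp [hz]
  rw [hpedges, List.mem_append, List.mem_cons] at hedge
  rcases hedge with h | h | h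
  · -- edge in q: k₂ ∈ q.support
    have : k₂ ∈ q.support := Walk.snd_mem_support_of_mem_edges q h
    exact hdisj k₂ this hk₂r
  · -- s(k₁,k₂) = s(k₁,w₁): k₂ = w₁ ∈ T
    rw [Sym2.eq_iff] at h
    rcases h with ⟨-, h2⟩ | ⟨h1, h2⟩
    · exact hk₂ (h2 ▸ hw₁)
    · exact hk₁k₂ h2.symm
  · -- edge in r: k₁ ∈ r.support
    have : k₁ ∈ r.support := Walk.fst_mem_support_of_mem_edges r h
    exact hdisj k₁ q.end_mem_support this






/-- extend an induced path by one edge at the end -/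
lemma cf_concat {u v w : V} (p : G.Walk u v) (hp : p.IsPath) (hcf : CF G p)
    (hadj : G.Adj v w) (hw : w ∉ p.support)
    (hnoadj : ∀ x ∈ p.support, x ≠ v → ¬ G.Adj x w) :
    (p.concat hadj).IsPath ∧ CF G (p.concat hadj) ∧
      (p.concat hadj).support = p.support ++ [w] := by
  have hsup : (p.concat hadj).support = p.support ++ [w] := by
    rw [Walk.support_concat]
  have hpath : (p.concat hadj).IsPath := by
    rw [Walk.isPath_def, hsup]
    refine List.Nodup.append hp.support_nodup (List.nodup_singleton w) ?_
    intro x hx hx'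
    rw [List.mem_singleton] at hx'
    exact hw (hx' ▸ hx)
  refine ⟨hpath, ?_, hsup⟩
  intro x y hx hy hadj'
  have hedges : (p.concat hadj).edges = p.edges ++ [s(v, w)] := by
    rw [Walk.edges_concat]; simp [List.concat_eq_append]
  rw [hsup, List.mem_append, List.mem_singleton] at hx hy
  rw [hedges, List.mem_append, List.mem_singleton]
  rcases hx with hx | rfl
  · rcases hy with hy | rfl
    · exact Or.inl (hcf hx hy hadj')
    · -- y = w
      by_cases hxv : x = v
      · subst hxv; right; rfl
      · exact absurd hadj' (hnoadj x hx hxv)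
  · rcases hy with hy | rfl
    · by_cases hyv : y = v
      · subst hyv; right; rw [Sym2.eq_swap]
      · exact absurd hadj'.symm (hnoadj y hy hyv)
    · exact (hadj'.ne rfl).elim

/-- two-edge induced path -/
lemma twoPath {u m v : V} (h1 : G.Adj u m) (h2 : G.Adj m v) (hne : u ≠ v)
    (hnadj : ¬ G.Adj u v) :
    ∃ p : G.Walk u v, p.IsPath ∧ CF G p ∧ p.support = [u, m, v] := by
  refine ⟨Walk.cons h1 (Walk.cons h2 Walk.nil), ?_, ?_, by simp⟩
  · rw [Walk.isPath_def]
    simp only [Walk.support_cons, Walk.support_nil]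
    refine List.nodup_cons.2 ⟨?_, List.nodup_cons.2 ⟨?_, List.nodup_singleton _⟩⟩
    · simp only [List.mem_cons, List.mem_singleton, List.not_mem_nil]
      push_neg
      exact ⟨h1.ne, hne, by simp⟩
    · simp only [List.mem_cons, List.mem_singleton, List.not_mem_nil]
      push_neg
      exact ⟨h2.ne, by simp⟩
  · intro x y hx hy hadj
    simp only [Walk.support_cons, Walk.support_nil, List.mem_cons, List.mem_singleton,
      List.not_mem_nil, or_false] at hx hy
    simp only [Walk.edges_cons, Walk.edges_nil, List.mem_cons, List.mem_singleton,
      List.not_mem_nil, or_false]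
    rcases hx with rfl | rfl | rfl <;> rcases hy with rfl | rfl | rfl
    · exact (hadj.ne rfl).elim
    · left; rfl
    · exact absurd hadj hnadj
    · left; rw [Sym2.eq_swap]
    · exact (hadj.ne rfl).elim
    · right; rfl
    · exact absurd hadj.symm hnadj
    · right; rw [Sym2.eq_swap]
    · exact (hadj.ne rfl).elim

/-- glue two induced paths at a common endpoint -/
lemma cf_append {u m v : V} (p : G.Walk u m) (q : G.Walk m v)
    (hp : p.IsPath) (hq : q.IsPath) (hcfp : CF G p) (hcfq : CF G q)
    (hint : ∀ x, x ∈ p.support → x ∈ q.support → x = m)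
    (hcross : ∀ x ∈ p.support, ∀ y ∈ q.support, x ≠ m → y ≠ m → ¬ G.Adj x y) :
    (p.append q).IsPath ∧ CF G (p.append q) := by
  constructor
  · rw [Walk.isPath_def, Walk.support_append]
    refine List.Nodup.append hp.support_nodup (hq.support_nodup.sublist (List.tail_sublist _)) ?_
    intro x hx hx'
    have hxq : x ∈ q.support := List.mem_of_mem_tail hx'
    have hxm := hint x hx hxq
    subst hxm
    have hnd := hq.support_nodup
    rw [q.support_eq_cons] at hnd
    rw [q.support_eq_cons] at hx'
    simp only [List.tail_cons] at hx'
    exact (List.nodup_cons.1 hnd).1 hx'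
  · intro x y hx hy hadj
    rw [Walk.mem_support_append_iff] at hx hy
    rw [Walk.edges_append, List.mem_append]
    rcases hx with hx | hx
    · rcases hy with hy | hy
      · exact Or.inl (hcfp hx hy hadj)
      · by_cases hxm : x = m
        · subst hxm; exact Or.inr (hcfq q.start_mem_support hy hadj)
        · by_cases hym : y = m
          · subst hym; exact Or.inl (hcfp hx p.end_mem_support hadj)
          · exact absurd hadj (hcross x hx y hy hxm hym)
    · rcases hy with hy | hy
      · by_cases hxm : x = m
        · subst hxm; exact Or.inl (hcfp p.end_mem_support hy hadj)
        · by_cases hym : y = m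
          · subst hym; exact Or.inr (hcfq hx q.start_mem_support hadj)
          · exact absurd hadj.symm (hcross y hy x hx hym hxm)
      · exact Or.inr (hcfq hx hy hadj)



lemma subset_mHull : X ⊆ mHull G X := by
  intro x hx C hC
  exact hC.2 hx

lemma mHull_subset_of {C : Set V} (hC : MConvex G C) (hXC : X ⊆ C) : mHull G X ⊆ C :=
  Set.sInter_subset_of_mem ⟨hC, hXC⟩

lemma mHull_convex : MConvex G (mHull G X) := by
  intro a ha b hb z hz C hC
  exact hC.1 a (ha C hC) b (hb C hC) hz

lemma mHull_mono {Y : Set V} (h : X ⊆ Y) : mHull G X ⊆ mHull G Y :=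
  mHull_subset_of mHull_convex (h.trans subset_mHull)

lemma interval_subset_mHull (hu : u ∈ mHull G X) (hv : v ∈ mHull G X) :
    mInterval G u v ⊆ mHull G X :=
  mHull_convex u hu v hv

lemma mInterval_self : mInterval G u u = {u} := by
  ext z
  constructor
  · rintro ⟨p, hp, -, hz⟩
    rw [Walk.isPath_iff_eq_nil] at hp
    subst hp
    simpa using hz
  · rintro rfl
    refine ⟨Walk.nil, Walk.IsPath.nil, ?_, by simp⟩
    intro a ha b hb hadj
    simp only [Walk.toSubgraph, SimpleGraph.singletonSubgraph_verts,
      Set.mem_singleton_iff] at ha hb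
    subst ha; subst hb
    exact absurd hadj (G.loopless.irrefl _)

lemma mconvex_singleton : MConvex G ({u} : Set V) := by
  intro a ha b hb z hz
  rcases ha with rfl; rcases hb with rfl
  rwa [mInterval_self] at hz

lemma mconvex_empty : MConvex G (∅ : Set V) := by
  intro a ha
  exact absurd ha (Set.notMem_empty a)

lemma mHull_singleton : mHull G ({u} : Set V) = {u} :=
  Set.Subset.antisymm (mHull_subset_of mconvex_singleton subset_rfl) subset_mHull

lemma mHull_empty : mHull G (∅ : Set V) = ∅ :=
  Set.Subset.antisymm (mHull_subset_of mconvex_empty subset_rfl) (Set.empty_subset _)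



/-! ### Structural lemmas under saturation -/

section Sat

variable {A B : Set V}

lemma mem_nbhd_iff {x : V} {Y : Set V} : x ∈ nbhd G Y ↔ x ∉ Y ∧ ∃ g ∈ Y, G.Adj g x := Iff.rfl

lemma rr_not_ab {z : V} (hz : z ∈ (cnbhd G (A ∪ B))ᶜ) : z ∉ A ∪ B := fun h => hz (Or.inl h)

lemma rr_no_ab_adj {z y : V} (hz : z ∈ (cnbhd G (A ∪ B))ᶜ) (hy : y ∈ A ∪ B) : ¬ G.Adj y z :=
  fun hadj => hz (Or.inr ⟨rr_not_ab hz, y, hy, hadj⟩)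

lemma mem_nn_of_not {z : V} (h1 : z ∉ A ∪ B) (h2 : z ∉ (cnbhd G (A ∪ B))ᶜ) :
    z ∈ nbhd G (A ∪ B) := by
  rw [Set.notMem_compl_iff] at h2
  rcases h2 with h | h
  · exact absurd h h1
  · exact h

lemma nn_not_rr {z : V} (h : z ∈ nbhd G (A ∪ B)) : z ∉ (cnbhd G (A ∪ B))ᶜ :=
  fun hz => hz (Or.inr h)

lemma shadow_sub (hsat : A = presat G A B) : shadow G A B ⊆ A := by
  conv_rhs => rw [hsat]
  exact (Set.subset_union_left).trans subset_mHull

lemma convex_of_sat (hsat : A = presat G A B) : MConvex G A := by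
  rw [hsat]
  exact mHull_convex

lemma walk_in_convex (hG : G.Connected) {C : Set V} (hC : MConvex G C) {x y : V}
    (hx : x ∈ C) (hy : y ∈ C) : ∃ w : G.Walk x y, ∀ z ∈ w.support, z ∈ C := by
  obtain ⟨w0⟩ := hG.preconnected x y
  obtain ⟨p, hp, hcf, -, -⟩ := geo (G := G) Set.univ ⟨w0, by simp⟩
  exact ⟨p, fun z hz => hC x hx y hy (mem_mInterval_iff.2 ⟨p, hp, hcf, hz⟩)⟩

lemma fact3 (hG : G.Connected) (hsat : A = presat G A B) {v b a₁ a₂ : V}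
    (hvA : v ∉ A) (hvB : v ∉ B) (ha₁ : a₁ ∈ A) (hva : G.Adj v a₁)
    (hb : b ∈ B) (ha₂ : a₂ ∈ A) (hab : G.Adj a₂ b) : G.Adj v b := by
  by_contra hn
  have hvb : v ≠ b := fun h => hvB (h ▸ hb)
  obtain ⟨wA, hwA⟩ := walk_in_convex hG (convex_of_sat hsat) ha₁ ha₂
  have hwalk : ∃ w : G.Walk v b, ∀ z ∈ w.support, z ∈ insert v (insert b A) := by
    refine ⟨Walk.cons hva (wA.concat hab), ?_⟩
    intro z hz
    simp only [Walk.support_cons, List.mem_cons] at hz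
    rcases hz with rfl | hz
    · exact Set.mem_insert _ _
    · rw [Walk.support_concat, List.mem_append,
        List.mem_singleton] at hz
      rcases hz with hz | rfl
      · exact Set.mem_insert_of_mem _ (Set.mem_insert_of_mem _ (hwA z hz))
      · exact Set.mem_insert_of_mem _ (Set.mem_insert _ _)
  obtain ⟨p, hp, hcf, hpS, -⟩ := geo _ hwalk
  cases p with
  | nil => exact hvb rfl
  | @cons _ m _ hvm q =>
    have hmq : m ∈ q.support := q.start_mem_support
    have hmb : m ≠ b := by
      rintro rfl
      have hq : q.IsPath := hp.of_cons
      rw [Walk.isPath_iff_eq_nil] at hq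
      subst hq
      exact hn hvm
    have hmv : m ≠ v := by
      rintro rfl
      rw [Walk.isPath_def, Walk.support_cons] at hp
      exact (List.nodup_cons.1 hp).1 hmq
    have hmA : m ∈ A := by
      have := hpS m (by rw [Walk.support_cons]; exact List.mem_cons_of_mem _ hmq)
      rcases this with h | h | h
      · exact absurd h hmv
      · exact absurd h hmb
      · exact h
    have hmI : m ∈ mInterval G v b :=
      mem_mInterval_iff.2 ⟨Walk.cons hvm q, hp, hcf, by simp [Walk.support_cons]⟩
    have hvH : v ∈ mHull G (B ∪ {v}) := subset_mHull (by simp)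
    have hbH : b ∈ mHull G (B ∪ {v}) := subset_mHull (Or.inl hb)
    have hmH : m ∈ mHull G (B ∪ {v}) := interval_subset_mHull hvH hbH hmI
    have : v ∈ shadow G A B := ⟨m, hmH, hmA⟩
    exact hvA (shadow_sub hsat this)

lemma nnadj (hG : G.Connected) (hsA : A = presat G A B) (hsB : B = presat G B A)
    {as bs : V} (has : as ∈ A) (hbs : bs ∈ B) (habs : G.Adj as bs)
    {n : V} (hn : n ∈ nbhd G (A ∪ B)) : G.Adj n as ∧ G.Adj n bs := by
  obtain ⟨hnab, g, hg, hgn⟩ := hn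
  have hnA : n ∉ A := fun h => hnab (Or.inl h)
  have hnB : n ∉ B := fun h => hnab (Or.inr h)
  rcases hg with hgA | hgB
  · have h1 : G.Adj n bs := fact3 hG hsA hnA hnB hgA hgn.symm hbs has habs
    have h2 : G.Adj n as := fact3 hG hsB hnB hnA hbs h1 has hbs habs.symm
    exact ⟨h2, h1⟩
  · have h1 : G.Adj n as := fact3 hG hsB hnB hnA hgB hgn.symm has hbs habs.symm
    have h2 : G.Adj n bs := fact3 hG hsA hnA hnB has h1 hbs has habs
    exact ⟨h1, h2⟩

lemma lem2path {x m y : V} (hne : x ≠ y) (hnadj : ¬ G.Adj x y)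
    (h1 : G.Adj x m) (h2 : G.Adj m y) : m ∈ mInterval G x y := by
  obtain ⟨p, hp, hcf, hsup⟩ := twoPath h1 h2 hne hnadj
  exact mem_mInterval_iff.2 ⟨p, hp, hcf, by rw [hsup]; simp⟩

lemma lemA (hG : G.Connected) (hsA : A = presat G A B) (hsB : B = presat G B A)
    {as bs : V} (has : as ∈ A) (hbs : bs ∈ B) (habs : G.Adj as bs)
    {n₁ n₂ : V} (h₁ : n₁ ∈ nbhd G (A ∪ B)) (h₂ : n₂ ∈ nbhd G (A ∪ B))
    (hne : n₁ ≠ n₂) (hnadj : ¬ G.Adj n₁ n₂) :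
    as ∈ mInterval G n₁ n₂ ∧ bs ∈ mInterval G n₁ n₂ := by
  obtain ⟨ha1, hb1⟩ := nnadj hG hsA hsB has hbs habs h₁
  obtain ⟨ha2, hb2⟩ := nnadj hG hsA hsB has hbs habs h₂
  exact ⟨lem2path hne hnadj ha1 ha2.symm, lem2path hne hnadj hb1 hb2.symm⟩

end Sat


/-! ### components of the remote region -/

def Scomp (G : SimpleGraph V) (RS : Set V) (x : V) : Set V :=
  {z | ∃ w : G.Walk x z, ∀ y ∈ w.support, y ∈ RS}

section Scomp

variable {RS : Set V} {x z t : V}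

lemma scomp_self (hx : x ∈ RS) : x ∈ Scomp G RS x :=
  ⟨Walk.nil, by simp [hx]⟩

lemma scomp_sub : Scomp G RS x ⊆ RS := fun z ⟨w, hw⟩ => hw z w.end_mem_support

lemma scomp_adj (hz : z ∈ Scomp G RS x) (hadj : G.Adj z t) (ht : t ∈ RS) :
    t ∈ Scomp G RS x := by
  obtain ⟨w, hw⟩ := hz
  refine ⟨w.concat hadj, ?_⟩
  intro y hy
  rw [Walk.support_concat, List.mem_append, List.mem_singleton] at hy
  rcases hy with hy | rfl
  · exact hw y hy
  · exact ht

lemma scomp_prefix (hz : z ∈ Scomp G RS x) :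
    ∃ w : G.Walk x z, ∀ y ∈ w.support, y ∈ Scomp G RS x := by
  obtain ⟨w, hw⟩ := hz
  refine ⟨w, fun y hy => ?_⟩
  exact ⟨w.takeUntil y hy, fun t ht => hw t (w.support_takeUntil_subset hy ht)⟩

lemma scomp_rev (hz : z ∈ Scomp G RS x) : x ∈ Scomp G RS z := by
  obtain ⟨w, hw⟩ := hz
  exact ⟨w.reverse, fun y hy => hw y (by rwa [Walk.support_reverse, List.mem_reverse] at hy)⟩

lemma scomp_trans (hz : z ∈ Scomp G RS x) (ht : t ∈ Scomp G RS z) : t ∈ Scomp G RS x := by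
  obtain ⟨w, hw⟩ := hz
  obtain ⟨w', hw'⟩ := ht
  refine ⟨w.append w', fun y hy => ?_⟩
  rw [Walk.mem_support_append_iff] at hy
  rcases hy with hy | hy
  · exact hw y hy
  · exact hw' y hy

lemma scomp_disj (hzx : z ∉ Scomp G RS x) (ht : t ∈ Scomp G RS x) (ht' : t ∈ Scomp G RS z) :
    False :=
  hzx (scomp_trans ht (scomp_rev ht'))

end Scomp

section Exit

variable {A B : Set V}

lemma exitR {x : V} :
    ∀ {x' y : V} (ω : G.Walk x' y), x' ∈ Scomp G (cnbhd G (A ∪ B))ᶜ x →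
      y ∉ (cnbhd G (A ∪ B))ᶜ →
      ∃ n ∈ ω.support, n ∈ nbhd G (A ∪ B) ∧ ∃ s ∈ Scomp G (cnbhd G (A ∪ B))ᶜ x, G.Adj s n := by
  intro x' y ω
  induction ω with
  | nil =>
    intro hx' hy
    exact absurd (scomp_sub hx') hy
  | @cons a b c hadj ω' ih =>
    intro hx' hy
    by_cases hb : b ∈ (cnbhd G (A ∪ B))ᶜ
    · have hbS : b ∈ Scomp G (cnbhd G (A ∪ B))ᶜ x := scomp_adj hx' hadj hb
      obtain ⟨n, hn1, hn2, hn3⟩ := ih hbS hy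
      exact ⟨n, by rw [Walk.support_cons]; exact List.mem_cons_of_mem _ hn1, hn2, hn3⟩
    · have hbab : b ∉ A ∪ B := by
        intro h
        exact rr_no_ab_adj (scomp_sub hx') h hadj.symm
      have hbn : b ∈ nbhd G (A ∪ B) := mem_nn_of_not hbab hb
      exact ⟨b, by rw [Walk.support_cons]; exact List.mem_cons_of_mem _ ω'.start_mem_support,
        hbn, a, hx', hadj⟩

end Exit

section Gamma

variable {A B : Set V}

lemma cf_reverse {x y : V} {p : G.Walk x y} (hcf : CF G p) : CF G p.reverse := by
  intro a b ha hb hadj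
  rw [Walk.support_reverse, List.mem_reverse] at ha hb
  rw [Walk.edges_reverse, List.mem_reverse]
  exact hcf ha hb hadj

lemma gamma_clique (hG : G.Connected) (hsA : A = presat G A B) (hsB : B = presat G B A)
    {as bs : V} (has : as ∈ A) (hbs : bs ∈ B) (habs : G.Adj as bs)
    {x n₁ n₂ : V}
    (h₁ : n₁ ∈ nbhd G (A ∪ B)) (h₂ : n₂ ∈ nbhd G (A ∪ B))
    (hs₁ : ∃ s ∈ Scomp G (cnbhd G (A ∪ B))ᶜ x, G.Adj s n₁)
    (hs₂ : ∃ s ∈ Scomp G (cnbhd G (A ∪ B))ᶜ x, G.Adj s n₂)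
    (hne : n₁ ≠ n₂) : G.Adj n₁ n₂ := by
  by_contra hnadj
  obtain ⟨s₁, hs₁S, hs₁a⟩ := hs₁
  obtain ⟨s₂, hs₂S, hs₂a⟩ := hs₂
  set RS := (cnbhd G (A ∪ B))ᶜ with hRS
  -- n₂ is not in RS ∪ ...
  have hn₂rr : n₂ ∉ RS := nn_not_rr h₂
  have hn₁rr : n₁ ∉ RS := nn_not_rr h₁
  -- walk from s₁ to n₂ with support in Scomp ∪ {n₂}
  have hwalk : ∃ w : G.Walk s₁ n₂, ∀ z ∈ w.support, z ∈ Scomp G RS x ∪ {n₂} := by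
    obtain ⟨w1, hw1⟩ := scomp_prefix (scomp_rev hs₁S)
    obtain ⟨w2, hw2⟩ := scomp_prefix hs₂S
    refine ⟨(w1.append w2).concat hs₂a, ?_⟩
    intro z hz
    rw [Walk.support_concat, List.mem_append, List.mem_singleton] at hz
    rcases hz with hz | rfl
    · rw [Walk.mem_support_append_iff] at hz
      rcases hz with hz | hz
      · exact Or.inl (scomp_trans hs₁S (hw1 z hz))
      · exact Or.inl (hw2 z hz)
    · exact Or.inr rfl
  obtain ⟨q, hq, hqcf, hqS, -⟩ := geo _ hwalk
  -- extend q by bs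
  have hbsadj : G.Adj n₂ bs := (nnadj hG hsA hsB has hbs habs h₂).2
  have hbsnot : bs ∉ q.support := by
    intro h
    rcases hqS bs h with h' | h'
    · exact (rr_not_ab (scomp_sub h')) (Or.inr hbs)
    · rw [Set.mem_singleton_iff] at h'
      exact (h₂.1 : n₂ ∉ A ∪ B) (h' ▸ Or.inr hbs)
  have hbsnoadj : ∀ z ∈ q.support, z ≠ n₂ → ¬ G.Adj z bs := by
    intro z hz hzn hadj
    rcases hqS z hz with h' | h'
    · exact rr_no_ab_adj (scomp_sub h') (Or.inr hbs) hadj.symm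
    · exact hzn h'
  obtain ⟨hq', hq'cf, hq'sup⟩ := cf_concat q hq hqcf hbsadj hbsnot hbsnoadj
  -- memberships in hull of B ∪ {s₁}
  have hs₁H : s₁ ∈ mHull G (B ∪ {s₁}) := subset_mHull (by simp)
  have hbsH : bs ∈ mHull G (B ∪ {s₁}) := subset_mHull (Or.inl hbs)
  have hn₂I : n₂ ∈ mInterval G s₁ bs := by
    refine mem_mInterval_iff.2 ⟨q.concat hbsadj, hq', hq'cf, ?_⟩
    rw [hq'sup, List.mem_append]
    exact Or.inl q.end_mem_support
  have hn₂H : n₂ ∈ mHull G (B ∪ {s₁}) := interval_subset_mHull hs₁H hbsH hn₂I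
  -- n₁ via two-path s₁ — n₁ — bs
  have hs₁bs_ne : s₁ ≠ bs := by
    intro h
    exact (rr_not_ab (scomp_sub hs₁S)) (h ▸ Or.inr hbs)
  have hs₁bs_nadj : ¬ G.Adj s₁ bs := fun h =>
    rr_no_ab_adj (scomp_sub hs₁S) (Or.inr hbs) h.symm
  have hn₁I : n₁ ∈ mInterval G s₁ bs :=
    lem2path hs₁bs_ne hs₁bs_nadj hs₁a (nnadj hG hsA hsB has hbs habs h₁).2
  have hn₁H : n₁ ∈ mHull G (B ∪ {s₁}) := interval_subset_mHull hs₁H hbsH hn₁I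
  -- a* lies in the interval between n₁ n₂ hence in the hull
  have hasI := (lemA hG hsA hsB has hbs habs h₁ h₂ hne hnadj).1
  have hasH : as ∈ mHull G (B ∪ {s₁}) := interval_subset_mHull hn₁H hn₂H hasI
  have : s₁ ∈ shadow G A B := ⟨as, hasH, has⟩
  exact (rr_not_ab (scomp_sub hs₁S)) (Or.inl (shadow_sub hsA this))

end Gamma


/-! ### the dichotomy -/

section Dich

variable {A B : Set V}

lemma build_y_to_n (hG : G.Connected) (hsA : A = presat G A B) (hsB : B = presat G B A)
    {as bs : V} (has : as ∈ A) (hbs : bs ∈ B) (habs : G.Adj as bs)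
    {y n' n : V} (hy : y ∈ (cnbhd G (A ∪ B))ᶜ) (hn' : n' ∈ nbhd G (A ∪ B))
    (hs' : ∃ s ∈ Scomp G (cnbhd G (A ∪ B))ᶜ y, G.Adj s n') (hn : n ∈ nbhd G (A ∪ B))
    (hnn' : ¬ G.Adj n n') (hnne : n ≠ n')
    (hnG : ¬ ∃ s ∈ Scomp G (cnbhd G (A ∪ B))ᶜ y, G.Adj s n) :
    ∃ p : G.Walk y n, p.IsPath ∧ CF G p ∧ n' ∈ p.support ∧
      ∀ z ∈ p.support, z ∈ Scomp G (cnbhd G (A ∪ B))ᶜ y ∪ {n', as, n} := by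
  set RS := (cnbhd G (A ∪ B))ᶜ with hRS
  obtain ⟨s', hs'S, hs'a⟩ := hs'
  have hwalk : ∃ w : G.Walk y n', ∀ z ∈ w.support, z ∈ Scomp G RS y ∪ {n'} := by
    obtain ⟨w1, hw1⟩ := scomp_prefix hs'S
    refine ⟨w1.concat hs'a, ?_⟩
    intro z hz
    rw [Walk.support_concat, List.mem_append, List.mem_singleton] at hz
    rcases hz with hz | rfl
    · exact Or.inl (hw1 z hz)
    · exact Or.inr rfl
  obtain ⟨q₀, hq₀, hq₀cf, hq₀S, -⟩ := geo _ hwalk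
  -- append as
  have hadj1 : G.Adj n' as := (nnadj hG hsA hsB has hbs habs hn').1
  have hasnot : as ∉ q₀.support := by
    intro h
    rcases hq₀S as h with h' | h'
    · exact (rr_not_ab (scomp_sub h')) (Or.inl has)
    · exact (hn'.1 : n' ∉ A ∪ B) (h' ▸ Or.inl has)
  have hasnoadj : ∀ z ∈ q₀.support, z ≠ n' → ¬ G.Adj z as := by
    intro z hz hzn hadj
    rcases hq₀S z hz with h' | h'
    · exact rr_no_ab_adj (scomp_sub h') (Or.inl has) hadj.symm
    · exact hzn h'
  obtain ⟨hq₁, hq₁cf, hq₁sup⟩ := cf_concat q₀ hq₀ hq₀cf hadj1 hasnot hasnoadj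
  set q₁ := q₀.concat hadj1 with hq₁def
  -- append n
  have hadj2 : G.Adj as n := (nnadj hG hsA hsB has hbs habs hn).1.symm
  have hnnot : n ∉ q₁.support := by
    rw [hq₁sup, List.mem_append, List.mem_singleton]
    rintro (h | rfl)
    · rcases hq₀S n h with h' | h'
      · exact (nn_not_rr hn) (scomp_sub h')
      · exact hnne h'
    · exact (hn.1 : n ∉ A ∪ B) (Or.inl has)
  have hnnoadj : ∀ z ∈ q₁.support, z ≠ as → ¬ G.Adj z n := by
    intro z hz hzas hadj
    rw [hq₁sup, List.mem_append, List.mem_singleton] at hz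
    rcases hz with hz | rfl
    · rcases hq₀S z hz with h' | h'
      · exact hnG ⟨z, h', hadj⟩
      · subst h'
        exact hnn' hadj.symm
    · exact hzas rfl
  obtain ⟨hq₂, hq₂cf, hq₂sup⟩ := cf_concat q₁ hq₁ hq₁cf hadj2 hnnot hnnoadj
  refine ⟨q₁.concat hadj2, hq₂, hq₂cf, ?_, ?_⟩
  · rw [hq₂sup, hq₁sup, List.mem_append]
    exact Or.inl (by rw [List.mem_append]; exact Or.inl q₀.end_mem_support)
  · intro z hz
    rw [hq₂sup, hq₁sup, List.mem_append, List.mem_append, List.mem_singleton,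
      List.mem_singleton] at hz
    rcases hz with (hz | rfl) | rfl
    · rcases hq₀S z hz with h' | h'
      · exact Or.inl h'
      · exact Or.inr (Or.inl h')
    · exact Or.inr (Or.inr (Or.inl rfl))
    · exact Or.inr (Or.inr (Or.inr rfl))

lemma dich (hG : G.Connected) (hsA : A = presat G A B) (hsB : B = presat G B A)
    {as bs : V} (has : as ∈ A) (hbs : bs ∈ B) (habs : G.Adj as bs)
    {X : Set V} (hX : X ⊆ (A ∪ B)ᶜ) :
    mHull G X ∩ (A ∪ B) = ∅ ∨
      ∃ x y, x ∈ X ∧ y ∈ X ∧ ∃ k₁ k₂, k₁ ∈ mHull G {x, y} ∧ k₂ ∈ mHull G {x, y} ∧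
        k₁ ∈ nbhd G (A ∪ B) ∧ k₂ ∈ nbhd G (A ∪ B) ∧ k₁ ≠ k₂ ∧ ¬ G.Adj k₁ k₂ := by
  classical
  set RS := (cnbhd G (A ∪ B))ᶜ with hRS
  set NN := nbhd G (A ∪ B) with hNN
  set Φ : Set V := {m | m ∈ NN ∧ (m ∈ X ∨ ∃ x ∈ X, x ∈ RS ∧
    ∃ s ∈ Scomp G RS x, G.Adj s m)} with hΦ
  by_cases hcq : ∀ m ∈ Φ, ∀ m' ∈ Φ, m ≠ m' → G.Adj m m'
  · -- Φ is a clique: build the separator side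
    left
    set D : Set V := {v | ∃ w : G.Walk v as, ∀ z ∈ w.support, z ∉ Φ} with hD
    have hPhiNotD : ∀ m ∈ Φ, m ∉ D := by
      rintro m hm ⟨ω, hω⟩
      exact hω m ω.start_mem_support hm
    have hCconv : MConvex G Dᶜ := by
      intro u hu v hv w hw
      obtain ⟨p, hp, hInd, hwsup⟩ := hw
      have hcf := (isInduced_iff_cf p).1 hInd
      by_contra hwD
      rw [Set.notMem_compl_iff] at hwD
      obtain ⟨k₁, k₂, w₁, w₂, hk₁s, hk₂s, hk₁D, hk₂D, hw₁D, hw₂D, ha₁, ha₂, hkne, hknadj⟩ :=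
        sandwich (T := D) p hp hcf hu hv ⟨w, hwsup, hwD⟩
      have hk₁Φ : k₁ ∈ Φ := by
        by_contra hk
        obtain ⟨ω, hω⟩ := hw₁D
        refine hk₁D ⟨Walk.cons ha₁ ω, ?_⟩
        intro z hz
        rw [Walk.support_cons, List.mem_cons] at hz
        rcases hz with rfl | hz
        · exact hk
        · exact hω z hz
      have hk₂Φ : k₂ ∈ Φ := by
        by_contra hk
        obtain ⟨ω, hω⟩ := hw₂D
        refine hk₂D ⟨Walk.cons ha₂ ω, ?_⟩
        intro z hz
        rw [Walk.support_cons, List.mem_cons] at hz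
        rcases hz with rfl | hz
        · exact hk
        · exact hω z hz
      exact hknadj (hcq k₁ hk₁Φ k₂ hk₂Φ hkne)
    have hXC : X ⊆ Dᶜ := by
      intro x hxX
      have hxAB : x ∉ A ∪ B := hX hxX
      by_cases hxRS : x ∈ RS
      · intro hxD
        obtain ⟨ω, hω⟩ := hxD
        have hasRS : as ∉ RS := by
          intro h
          exact (rr_not_ab h) (Or.inl has)
        obtain ⟨nx, hsup, hnnx, s, hsS, hsadj⟩ := exitR ω (scomp_self hxRS) hasRS
        exact hω nx hsup ⟨hnnx, Or.inr ⟨x, hxX, hxRS, s, hsS, hsadj⟩⟩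
      · have hxNN : x ∈ NN := mem_nn_of_not hxAB hxRS
        exact hPhiNotD x ⟨hxNN, Or.inl hxX⟩
    have hABD : ∀ g ∈ A ∪ B, g ∈ D := by
      have hΦAB : ∀ m ∈ Φ, m ∉ A ∪ B := fun m hm => (hm.1.1 : m ∉ A ∪ B)
      rintro g (hg | hg)
      · obtain ⟨w, hw⟩ := walk_in_convex hG (convex_of_sat hsA) hg has
        exact ⟨w, fun z hz hzΦ => hΦAB z hzΦ (Or.inl (hw z hz))⟩
      · obtain ⟨w, hw⟩ := walk_in_convex hG (convex_of_sat hsB) hg hbs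
        refine ⟨w.concat habs.symm, ?_⟩
        intro z hz hzΦ
        rw [Walk.support_concat, List.mem_append,
          List.mem_singleton] at hz
        rcases hz with hz | rfl
        · exact hΦAB z hzΦ (Or.inr (hw z hz))
        · exact hΦAB z hzΦ (Or.inl has)
    rw [Set.eq_empty_iff_forall_notMem]
    rintro g ⟨hgH, hgAB⟩
    exact (mHull_subset_of hCconv hXC hgH) (hABD g hgAB)
  · -- Φ is not a clique: produce the two witnesses
    right
    push_neg at hcq
    obtain ⟨m, hm, m', hm', hmne, hmnadj⟩ := hcq
    obtain ⟨hmNN, hmor⟩ := hm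
    obtain ⟨hm'NN, hm'or⟩ := hm'
    rcases hmor with hmX | ⟨xx, hxx, hxxR, hsx⟩
    · rcases hm'or with hm'X | ⟨yy, hyy, hyyR, hsy⟩
      · -- both in X
        exact ⟨m, m', hmX, hm'X, m, m', subset_mHull (by simp), subset_mHull (by simp),
          hmNN, hm'NN, hmne, hmnadj⟩
      · -- m ∈ X, m' attached to comp of yy
        by_cases hmem : ∃ s ∈ Scomp G RS yy, G.Adj s m
        · exact absurd (gamma_clique hG hsA hsB has hbs habs hmNN hm'NN hmem hsy hmne)
            hmnadj
        · obtain ⟨p, hp, hcf, hm'sup, hpS⟩ := build_y_to_n hG hsA hsB has hbs habs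
            hyyR hm'NN hsy hmNN hmnadj hmne hmem
          refine ⟨yy, m, hyy, hmX, m, m', ?_, ?_, hmNN, hm'NN, hmne, hmnadj⟩
          · exact interval_subset_mHull (subset_mHull (by simp)) (subset_mHull (by simp))
              (mem_mInterval_iff.2 ⟨p, hp, hcf, p.end_mem_support⟩)
          · exact interval_subset_mHull (subset_mHull (by simp)) (subset_mHull (by simp))
              (mem_mInterval_iff.2 ⟨p, hp, hcf, hm'sup⟩)
    · rcases hm'or with hm'X | ⟨yy, hyy, hyyR, hsy⟩
      · -- m attached to comp of xx, m' ∈ X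
        by_cases hmem : ∃ s ∈ Scomp G RS xx, G.Adj s m'
        · exact absurd (gamma_clique hG hsA hsB has hbs habs hmNN hm'NN hsx hmem hmne)
            hmnadj
        · obtain ⟨p, hp, hcf, hmsup, hpS⟩ := build_y_to_n hG hsA hsB has hbs habs
            hxxR hmNN hsx hm'NN (fun h => hmnadj h.symm) (Ne.symm hmne) hmem
          refine ⟨xx, m', hxx, hm'X, m, m', ?_, ?_, hmNN, hm'NN, hmne, hmnadj⟩
          · exact interval_subset_mHull (subset_mHull (by simp)) (subset_mHull (by simp))
              (mem_mInterval_iff.2 ⟨p, hp, hcf, hmsup⟩)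
          · exact interval_subset_mHull (subset_mHull (by simp)) (subset_mHull (by simp))
              (mem_mInterval_iff.2 ⟨p, hp, hcf, p.end_mem_support⟩)
      · -- both attached to components
        by_cases hxy : yy ∈ Scomp G RS xx
        · -- same component
          have hsy' : ∃ s ∈ Scomp G RS xx, G.Adj s m' := by
            obtain ⟨s, hsS, hsa⟩ := hsy
            exact ⟨s, scomp_trans hxy hsS, hsa⟩
          exact absurd (gamma_clique hG hsA hsB has hbs habs hmNN hm'NN hsx hsy' hmne)
            hmnadj
        · by_cases hmem1 : ∃ s ∈ Scomp G RS yy, G.Adj s m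
          · exact absurd (gamma_clique hG hsA hsB has hbs habs hmNN hm'NN hmem1 hsy hmne)
              hmnadj
          · by_cases hmem2 : ∃ s ∈ Scomp G RS xx, G.Adj s m'
            · exact absurd (gamma_clique hG hsA hsB has hbs habs hmNN hm'NN hsx hmem2
                hmne) hmnadj
            · -- the long path from yy through m', as, m to xx
              obtain ⟨p₁, hp₁, hcf₁, hm'sup, hp₁S⟩ := build_y_to_n hG hsA hsB has hbs habs
                hyyR hm'NN hsy hmNN hmnadj hmne hmem1
              -- induced path from xx to m inside Scomp xx ∪ {m}
              obtain ⟨s, hsS, hsa⟩ := hsx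
              have hwalk : ∃ w : G.Walk xx m, ∀ z ∈ w.support,
                  z ∈ Scomp G RS xx ∪ {m} := by
                obtain ⟨w1, hw1⟩ := scomp_prefix hsS
                refine ⟨w1.concat hsa, ?_⟩
                intro z hz
                rw [Walk.support_concat, List.mem_append,
                  List.mem_singleton] at hz
                rcases hz with hz | rfl
                · exact Or.inl (hw1 z hz)
                · exact Or.inr rfl
              obtain ⟨r, hr, hrcf, hrS, -⟩ := geo _ hwalk
              set q₃ := r.reverse with hq₃
              have hq₃path : q₃.IsPath := hr.reverse
              have hq₃cf : CF G q₃ := cf_reverse hrcf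
              have hq₃S : ∀ z ∈ q₃.support, z ∈ Scomp G RS xx ∪ {m} := by
                intro z hz
                rw [hq₃, Walk.support_reverse, List.mem_reverse] at hz
                exact hrS z hz
              -- glue
              have hint : ∀ z, z ∈ p₁.support → z ∈ q₃.support → z = m := by
                intro z hz1 hz2
                rcases hq₃S z hz2 with hz2' | hz2'
                · rcases hp₁S z hz1 with hz1' | hz1'
                  · exact (scomp_disj hxy hz2' hz1').elim
                  · simp only [Set.mem_insert_iff, Set.mem_singleton_iff] at hz1'
                    rcases hz1' with rfl | rfl | rfl
                    · exact absurd (scomp_sub hz2') (nn_not_rr hm'NN)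
                    · exact absurd (scomp_sub hz2')
                        (fun h => (rr_not_ab h) (Or.inl has))
                    · rfl
                · exact hz2'
              have hcross : ∀ z ∈ p₁.support, ∀ z' ∈ q₃.support,
                  z ≠ m → z' ≠ m → ¬ G.Adj z z' := by
                intro z hz1 z' hz2 hzm hz'm hadj
                have hz2' : z' ∈ Scomp G RS xx := by
                  rcases hq₃S z' hz2 with h | h
                  · exact h
                  · exact absurd h hz'm
                rcases hp₁S z hz1 with hz1' | hz1'
                · -- z in Scomp yy adjacent to z' ∈ Scomp xx : merge
                  have : z ∈ Scomp G RS xx :=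
                    scomp_adj hz2' hadj.symm (scomp_sub hz1')
                  exact scomp_disj hxy this hz1'
                · simp only [Set.mem_insert_iff, Set.mem_singleton_iff] at hz1'
                  rcases hz1' with rfl | rfl | rfl
                  · exact hmem2 ⟨z', hz2', hadj.symm⟩
                  · exact rr_no_ab_adj (scomp_sub hz2') (Or.inl has) hadj
                  · exact hzm rfl
              obtain ⟨hP, hPcf⟩ := cf_append p₁ q₃ hp₁ hq₃path hcf₁ hq₃cf hint hcross
              refine ⟨yy, xx, hyy, hxx, m, m', ?_, ?_, hmNN, hm'NN, hmne, hmnadj⟩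
              · refine interval_subset_mHull (subset_mHull (by simp)) (subset_mHull (by simp))
                  (mem_mInterval_iff.2 ⟨p₁.append q₃, hP, hPcf, ?_⟩)
                rw [Walk.mem_support_append_iff]
                exact Or.inl p₁.end_mem_support
              · refine interval_subset_mHull (subset_mHull (by simp)) (subset_mHull (by simp))
                  (mem_mInterval_iff.2 ⟨p₁.append q₃, hP, hPcf, ?_⟩)
                rw [Walk.mem_support_append_iff]
                exact Or.inl hm'sup

end Dich


/-! ### final assembly -/

section Final

variable {A B : Set V}

lemma key (hG : G.Connected) (hsA : A = presat G A B) (hsB : B = presat G B A)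
    {as bs : V} (has : as ∈ A) (hbs : bs ∈ B) (habs : G.Adj as bs)
    {X : Set V} (hX : X ⊆ (A ∪ B)ᶜ) (htouch : (mHull G X ∩ (A ∪ B)).Nonempty) :
    ∃ x y, x ∈ X ∧ y ∈ X ∧ Forbidden G A B {x, y} ∧
      ∃ k₁ k₂, k₁ ∈ mHull G {x, y} ∧ k₂ ∈ mHull G {x, y} ∧
        k₁ ∈ nbhd G (A ∪ B) ∧ k₂ ∈ nbhd G (A ∪ B) ∧ k₁ ≠ k₂ ∧ ¬ G.Adj k₁ k₂ := by
  rcases dich hG hsA hsB has hbs habs hX with hleft | hright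
  · rw [hleft] at htouch
    exact absurd htouch Set.not_nonempty_empty
  · obtain ⟨x, y, hx, hy, k₁, k₂, hk₁H, hk₂H, hk₁N, hk₂N, hkne, hknadj⟩ := hright
    obtain ⟨hasI, hbsI⟩ := lemA hG hsA hsB has hbs habs hk₁N hk₂N hkne hknadj
    have hasH : as ∈ mHull G {x, y} := interval_subset_mHull hk₁H hk₂H hasI
    have hbsH : bs ∈ mHull G {x, y} := interval_subset_mHull hk₁H hk₂H hbsI
    have hpairsub : ({x, y} : Set V) ⊆ (A ∪ B)ᶜ := by
      intro z hz
      rcases hz with rfl | rfl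
      · exact hX hx
      · exact hX hy
    exact ⟨x, y, hx, hy, ⟨hpairsub, ⟨as, hasH, has⟩, ⟨bs, hbsH, hbs⟩⟩,
      k₁, k₂, hk₁H, hk₂H, hk₁N, hk₂N, hkne, hknadj⟩

lemma clique_of_subsingleton {u : V} {K : Set V} (hK : K ⊆ {u}) : Paper.IsClique G K := by
  intro x hx y hy hxy
  have hx' := hK hx
  have hy' := hK hy
  rw [Set.mem_singleton_iff] at hx' hy'
  exact absurd (hx'.trans hy'.symm) hxy

end Final

end PaperProof

theorem stmt_11 [Fintype V] (G : SimpleGraph V) (hG : G.Connected)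
    (A B : Set V) (hL : Linked G A B) (hd : Disjoint A B)
    (hS : Saturated G A B) :
    MFS G A B = {X | ∃ u v : V, X = {u, v} ∧ X ⊆ (A ∪ B)ᶜ ∧
        ¬ IsClique G (mHull G {u, v} ∩ nbhd G (A ∪ B))} ∧
    ∀ X ∈ MFS G A B, X.ncard = 2 := by
  classical
  obtain ⟨as, has, bs, hbs, habs⟩ := hL
  obtain ⟨hsA, hsB⟩ := hS
  -- forward direction, giving also distinctness of the two elements
  have fwd : ∀ X ∈ MFS G A B, ∃ u v : V, u ≠ v ∧ X = {u, v} ∧ X ⊆ (A ∪ B)ᶜ ∧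
      ¬ IsClique G (mHull G {u, v} ∩ nbhd G (A ∪ B)) := by
    intro X hXM
    obtain ⟨hF, hmin⟩ := hXM
    obtain ⟨hXsub, hFA, hFB⟩ := hF
    have htouch : (mHull G X ∩ (A ∪ B)).Nonempty := by
      obtain ⟨a, haH, haA⟩ := hFA
      exact ⟨a, haH, Or.inl haA⟩
    obtain ⟨x, y, hxX, hyX, hFxy, k₁, k₂, hk₁H, hk₂H, hk₁N, hk₂N, hkne, hknadj⟩ :=
      PaperProof.key hG hsA hsB has hbs habs hXsub htouch
    have hxy : x ≠ y := by
      rintro rfl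
      obtain ⟨a, haH, haA⟩ := hFxy.2.1
      rw [Set.pair_eq_singleton, PaperProof.mHull_singleton, Set.mem_singleton_iff] at haH
      subst haH
      exact hXsub hxX (Or.inl haA)
    have hsubX : ({x, y} : Set V) ⊆ X := by
      intro z hz
      rcases hz with rfl | rfl
      · exact hxX
      · exact hyX
    have hXeq : X = {x, y} := by
      by_contra hno
      exact hmin {x, y} ⟨hsubX, fun habs' => hno (Set.Subset.antisymm habs' hsubX)⟩ hFxy
    refine ⟨x, y, hxy, hXeq, hXsub, ?_⟩
    intro hclq
    exact hknadj (hclq k₁ ⟨hk₁H, hk₁N⟩ k₂ ⟨hk₂H, hk₂N⟩ hkne)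
  constructor
  · ext X
    simp only [Set.mem_setOf_eq]
    constructor
    · intro hXM
      obtain ⟨u, v, -, hXeq, hXsub, hnclq⟩ := fwd X hXM
      exact ⟨u, v, hXeq, hXsub, hnclq⟩
    · rintro ⟨u, v, rfl, hsub, hnclq⟩
      have huv : u ≠ v := by
        rintro rfl
        apply hnclq
        apply PaperProof.clique_of_subsingleton (u := u)
        intro z hz
        rw [Set.pair_eq_singleton, PaperProof.mHull_singleton] at hz
        exact hz.1
      -- extract the non-clique witnesses
      have hnclq' : ∃ k₁ ∈ mHull G {u, v} ∩ nbhd G (A ∪ B),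
          ∃ k₂ ∈ mHull G {u, v} ∩ nbhd G (A ∪ B), k₁ ≠ k₂ ∧ ¬ G.Adj k₁ k₂ := by
        by_contra hno
        push_neg at hno
        exact hnclq (fun a ha b hb hab => hno a ha b hb hab)
      obtain ⟨k₁, hk₁, k₂, hk₂, hkne, hknadj⟩ := hnclq'
      obtain ⟨hasI, hbsI⟩ := PaperProof.lemA hG hsA hsB has hbs habs hk₁.2 hk₂.2 hkne hknadj
      have hasH : as ∈ mHull G {u, v} :=
        PaperProof.interval_subset_mHull hk₁.1 hk₂.1 hasI
      have hbsH : bs ∈ mHull G {u, v} :=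
        PaperProof.interval_subset_mHull hk₁.1 hk₂.1 hbsI
      refine ⟨⟨hsub, ⟨as, hasH, has⟩, ⟨bs, hbsH, hbs⟩⟩, ?_⟩
      -- minimality
      intro Y hY hFY
      have hYsub : Y ⊆ {u, v} := hY.subset
      have hsingle : (∃ w : V, Y ⊆ {w}) := by
        by_cases hu : u ∈ Y
        · by_cases hv : v ∈ Y
          · exfalso
            apply hY.ne
            exact Set.Subset.antisymm hYsub (by
              intro z hz
              rcases hz with rfl | rfl
              · exact hu
              · exact hv)
          · refine ⟨u, fun z hz => ?_⟩
            rcases hYsub hz with rfl | rfl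
            · rfl
            · exact absurd hz hv
        · refine ⟨v, fun z hz => ?_⟩
          rcases hYsub hz with rfl | rfl
          · exact absurd hz hu
          · rfl
      obtain ⟨w, hw⟩ := hsingle
      obtain ⟨a, haH, haA⟩ := hFY.2.1
      have : mHull G Y ⊆ {w} := by
        calc mHull G Y ⊆ mHull G {w} := PaperProof.mHull_mono hw
        _ = {w} := PaperProof.mHull_singleton
      have haw : a = w := this haH
      subst haw
      have hwY : a ∈ mHull G Y := haH
      -- w ∈ A contradicts Y ⊆ {u,v} ⊆ (A∪B)ᶜ... need w ∈ Y? w might not be in Y!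
      -- instead: Y ⊆ {w}: Y = ∅ or Y = {w}
      rcases Set.subset_singleton_iff_eq.mp hw with rfl | rfl
      · rw [PaperProof.mHull_empty] at haH
        exact haH
      · rw [PaperProof.mHull_singleton] at haH
        exact hsub (hYsub haH) (Or.inl haA)
  · intro X hXM
    obtain ⟨u, v, huv, hXeq, -, -⟩ := fwd X hXM
    rw [hXeq]
    exact Set.ncard_pair huv
end
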